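/- arXiv:1009.0566 — 8 statements merged into one kernel-verified Lean document; each statement's English description precedes it below -/
import Mathlib

section
/- The Rado bit graph has the extension property: for any two disjoint finite sets J, D of natural numbers there exists a natural number v, lying in neither J nor D, such that v is adjacent to every element of J and to no element of D, where two distinct natural numbers m, n are adjacent exactly when Nat.testBit m n = true or Nat.testBit n m = true. -/
/-- The Rado bit graph: distinct naturals `m`, `n` are adjacent iff the `n`-th binary
digit of `m` is 1 or the `m`-th binary digit of `n` is 1. -/
def radoGraph : SimpleGraph ℕ where
  Adj m n := m ≠ n ∧ (Nat.testBit m n = true ∨ Nat.testBit n m = true)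
  symm := ⟨fun m n ⟨h, h'⟩ => ⟨h.symm, h'.symm⟩⟩
  loopless := ⟨fun m ⟨h, _⟩ => h rfl⟩

lemma exists_testBit_iff (s : Finset ℕ) : ∃ v : ℕ, ∀ j, v.testBit j = true ↔ j ∈ s := by
  classical
  induction s using Finset.induction_on with
  | empty => exact ⟨0, by simp⟩
  | @insert a s ha ih =>
    obtain ⟨v, hv⟩ := ih
    refine ⟨2 ^ a ||| v, fun j => ?_⟩
    rw [Nat.testBit_or, Nat.testBit_two_pow]
    rw [Bool.or_eq_true, decide_eq_true_eq, hv, Finset.mem_insert]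
    tauto

/-- The Rado bit graph has the extension property. -/
theorem radoGraph_extension_property (J D : Finset ℕ) (hJD : Disjoint J D) :
    ∃ v : ℕ, v ∉ J ∧ v ∉ D ∧ (∀ j ∈ J, radoGraph.Adj v j) ∧ ∀ d ∈ D, ¬ radoGraph.Adj v d := by
  classical
  set N := (J ∪ D).sup id + 1 with hN
  obtain ⟨v, hv⟩ := exists_testBit_iff (insert N J)
  have hvN : v.testBit N = true := (hv N).2 (Finset.mem_insert_self _ _)
  have hvge : 2 ^ N ≤ v := Nat.ge_two_pow_of_testBit hvN
  have hNlev : N ≤ v := le_trans (Nat.le_of_lt (Nat.lt_two_pow_self (n := N))) hvge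
  have hlt : ∀ x ∈ J ∪ D, x < N := fun x hx =>
    Nat.lt_succ_of_le (Finset.le_sup (f := id) hx)
  have hltv : ∀ x ∈ J ∪ D, x < v := fun x hx => lt_of_lt_of_le (hlt x hx) hNlev
  refine ⟨v, fun h => absurd (hltv v (Finset.mem_union_left _ h)) (lt_irrefl v),
    fun h => absurd (hltv v (Finset.mem_union_right _ h)) (lt_irrefl v), ?_, ?_⟩
  · intro j hj
    exact ⟨(hltv j (Finset.mem_union_left _ hj)).ne', Or.inl ((hv j).2 (Finset.mem_insert_of_mem hj))⟩
  · intro d hd hadj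
    obtain ⟨hne, h1 | h2⟩ := hadj
    · have : d ∈ insert N J := (hv d).1 h1
      rcases Finset.mem_insert.1 this with h | h
      · exact absurd h (hlt d (Finset.mem_union_right _ hd)).ne
      · exact absurd hd (Finset.disjoint_left.1 hJD h)
    · have : 2 ^ v ≤ d := Nat.ge_two_pow_of_testBit h2
      have : d < 2 ^ v := lt_of_lt_of_le (hltv d (Finset.mem_union_right _ hd)) (Nat.le_of_lt (Nat.lt_two_pow_self (n := v)))
      omega
end

section
/- The Rado bit graph R_ℕ is ultrahomogeneous and universal for countable graphs: every graph isomorphism between two finite induced subgraphs of R_ℕ extends to an automorphism of R_ℕ, and every simple graph on a countable vertex type is isomorphic to an induced subgraph of R_ℕ (i.e., admits a graph embedding into R_ℕ). -/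
lemma sum_range_two_pow (k : ℕ) : (∑ i ∈ Finset.range k, 2 ^ i) = 2 ^ k - 1 := by
  induction k with
  | zero => simp
  | succ n ih => rw [Finset.sum_range_succ, ih]
                 have : 1 ≤ 2 ^ n := Nat.one_le_two_pow
                 rw [pow_succ]; omega

lemma sum_two_pow_lt {A : Finset ℕ} {k : ℕ} (h : ∀ a ∈ A, a < k) :
    (∑ i ∈ A, 2 ^ i) < 2 ^ k := by
  have h1 : (∑ i ∈ A, 2 ^ i) ≤ ∑ i ∈ Finset.range k, 2 ^ i :=
    Finset.sum_le_sum_of_subset (fun a ha => Finset.mem_range.mpr (h a ha))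
  have h2 := sum_range_two_pow k
  have : 1 ≤ 2 ^ k := Nat.one_le_two_pow
  omega

lemma testBit_two_pow_add_of_lt {k s : ℕ} (hs : s < 2 ^ k) (j : ℕ) :
    Nat.testBit (2 ^ k + s) j = (decide (j = k) || Nat.testBit s j) := by
  rcases lt_trichotomy j k with hj | rfl | hj
  · have hkj : k - j + j = k := by omega
    have h1 : 2 ^ k + s = s + 2 ^ (k - j) * 2 ^ j := by
      rw [← pow_add, hkj]; omega
    rw [Nat.testBit_eq_decide_div_mod_eq, Nat.testBit_eq_decide_div_mod_eq, h1,
      Nat.add_mul_div_right _ _ (Nat.two_pow_pos j)]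
    have h2 : 2 ^ (k - j) % 2 = 0 := by
      have hne : k - j ≠ 0 := by omega
      rcases Nat.exists_eq_succ_of_ne_zero hne with ⟨t, ht⟩
      rw [ht, pow_succ, Nat.mul_mod_left]
    have h3 : (s / 2 ^ j + 2 ^ (k - j)) % 2 = s / 2 ^ j % 2 := by omega
    rw [h3]
    have : j ≠ k := by omega
    simp [this]
  · have h1 : (2 ^ j + s) / 2 ^ j = 1 := by
      rw [Nat.add_div_left _ (Nat.two_pow_pos j), Nat.div_eq_of_lt hs]
    rw [Nat.testBit_eq_decide_div_mod_eq, h1, Nat.testBit_eq_false_of_lt hs]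
    simp
  · have hlt : 2 ^ k + s < 2 ^ j := by
      have h1 : 2 ^ (k+1) ≤ 2 ^ j := Nat.pow_le_pow_right (by norm_num) hj
      have h2 : (2:ℕ) ^ (k+1) = 2 * 2 ^ k := by rw [pow_succ]; ring
      omega
    rw [Nat.testBit_eq_false_of_lt hlt, Nat.testBit_eq_false_of_lt (by omega)]
    have : j ≠ k := by omega
    simp [this]

lemma testBit_sum_pow {n : ℕ} : ∀ {A : Finset ℕ}, (∀ a ∈ A, a < n) →
    ∀ j, Nat.testBit (∑ i ∈ A, 2 ^ i) j = decide (j ∈ A) := by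
  classical
  induction n with
  | zero =>
    intro A hA j
    have hA0 : A = ∅ := Finset.eq_empty_of_forall_notMem (fun a ha => by have := hA a ha; omega)
    subst hA0; simp
  | succ n ih =>
    intro A hA j
    by_cases hn : n ∈ A
    · have hA' : ∀ a ∈ A.erase n, a < n := by
        intro a ha
        have h1 := Finset.mem_of_mem_erase ha
        have h2 := Finset.ne_of_mem_erase ha
        have h3 := hA a h1; omega
      have hsum : (∑ i ∈ A, 2 ^ i) = 2 ^ n + ∑ i ∈ A.erase n, 2 ^ i := by
        rw [← Finset.add_sum_erase _ _ hn]
      rw [hsum, testBit_two_pow_add_of_lt (sum_two_pow_lt hA'), ih hA' j]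
      by_cases hj : j = n
      · subst hj; simp [hn]
      · simp only [hj, decide_false, Bool.false_or, decide_eq_decide, Finset.mem_erase]
        exact ⟨fun h => h.2, fun h => ⟨hj, h⟩⟩
    · exact ih (fun a ha => by
        have h1 := hA a ha
        have h2 : a ≠ n := fun h => hn (h ▸ ha)
        omega) j

lemma rado_ext (A B : Finset ℕ) (hAB : Disjoint A B) :
    ∃ z, z ∉ A ∧ z ∉ B ∧ (∀ a ∈ A, radoGraph.Adj z a) ∧ (∀ b ∈ B, ¬ radoGraph.Adj z b) := by
  classical
  set k := (A ∪ B).sup id + 1 with hk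
  have hkA : ∀ a ∈ A, a < k := fun a ha => by
    have : a ≤ (A ∪ B).sup id := Finset.le_sup (f := id) (Finset.mem_union_left _ ha)
    omega
  have hkB : ∀ b ∈ B, b < k := fun b hb => by
    have : b ≤ (A ∪ B).sup id := Finset.le_sup (f := id) (Finset.mem_union_right _ hb)
    omega
  set z := ∑ i ∈ insert k A, 2 ^ i with hz
  have hbits : ∀ j, Nat.testBit z j = decide (j ∈ insert k A) := by
    intro j
    apply testBit_sum_pow (n := k + 1)
    intro a ha
    rcases Finset.mem_insert.mp ha with rfl | ha
    · omega
    · have := hkA a ha; omega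
  have hzk : 2 ^ k ≤ z := by
    rw [hz, Finset.sum_insert (fun h => by have := hkA k h; omega)]
    omega
  have hklt : k < 2 ^ k := Nat.lt_two_pow_self (n := k)
  have hzA : z ∉ A := fun h => by have := hkA z h; omega
  have hzB : z ∉ B := fun h => by have := hkB z h; omega
  refine ⟨z, hzA, hzB, ?_, ?_⟩
  · intro a ha
    refine ⟨fun h => by subst h; exact hzA ha, Or.inl ?_⟩
    rw [hbits a]
    simp [Finset.mem_insert_of_mem ha]
  · intro b hb hadj
    rcases hadj with ⟨hne, h | h⟩
    · rw [hbits b] at h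
      simp only [decide_eq_true_eq, Finset.mem_insert] at h
      rcases h with rfl | h
      · exact absurd hb (fun hb' => by have := hkB k hb'; omega)
      · exact (Finset.disjoint_left.mp hAB h) hb
    · rw [Nat.testBit_eq_false_of_lt] at h
      · exact Bool.false_ne_true h
      · calc b < 2 ^ b := Nat.lt_two_pow_self (n := b)
          _ ≤ 2 ^ z := Nat.pow_le_pow_right (by norm_num) (by have := hkB b hb; omega)

open FirstOrder Language

instance radoStructure : Language.graph.Structure ℕ := radoGraph.structure

def gsub (s : Set ℕ) : Language.graph.Substructure ℕ where
  carrier := s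
  fun_mem := fun {_} f => isEmptyElim f

@[simp] lemma mem_gsub {s : Set ℕ} {x : ℕ} : x ∈ gsub s ↔ x ∈ s := Iff.rfl

lemma gsub_fg (s : Set ℕ) (hs : s.Finite) : (gsub s).FG := by
  rw [Substructure.fg_iff_finite]
  exact hs.to_subtype

lemma equiv_adj (f : ℕ ≃ₚ[Language.graph] ℕ) (a b : f.dom) :
    radoGraph.Adj ↑(f.toEquiv a) ↑(f.toEquiv b) ↔ radoGraph.Adj ↑a ↑b := by
  have h := f.toEquiv.map_rel' adj ![a, b]
  exact h

lemma rado_extend_one (f : ℕ ≃ₚ[Language.graph] ℕ) (hfg : f.dom.FG) (m : ℕ)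
    (hm : m ∉ f.dom) :
    ∃ g : ℕ ≃ₚ[Language.graph] ℕ, g.dom.FG ∧ m ∈ g.dom ∧ f ≤ g := by
  classical
  haveI : Finite f.dom := hfg.finite
  haveI : Finite f.cod := (f.dom_fg_iff_cod_fg.mp hfg).finite
  have hDfin : (↑f.dom : Set ℕ).Finite := Set.toFinite _
  have hCfin : (↑f.cod : Set ℕ).Finite := Set.toFinite _
  set sA : Set ℕ := {y | ∃ x : f.dom, radoGraph.Adj m ↑x ∧ ↑(f.toEquiv x) = y} with hsA
  set sB : Set ℕ := {y | ∃ x : f.dom, ¬radoGraph.Adj m ↑x ∧ ↑(f.toEquiv x) = y} with hsB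
  have hsAfin : sA.Finite := by
    apply Set.Finite.subset hCfin
    rintro y ⟨x, _, rfl⟩; exact (f.toEquiv x).2
  have hsBfin : sB.Finite := by
    apply Set.Finite.subset hCfin
    rintro y ⟨x, _, rfl⟩; exact (f.toEquiv x).2
  have hdisj : Disjoint hsAfin.toFinset hsBfin.toFinset := by
    rw [Finset.disjoint_left]
    intro y hyA hyB
    rw [Set.Finite.mem_toFinset] at hyA hyB
    obtain ⟨x, hx, hxy⟩ := hyA
    obtain ⟨x', hx', hxy'⟩ := hyB
    have : f.toEquiv x = f.toEquiv x' := Subtype.ext (hxy.trans hxy'.symm)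
    have : x = x' := f.toEquiv.injective this
    exact hx' (this ▸ hx)
  obtain ⟨z, hzA, hzB, hzadj, hznadj⟩ := rado_ext _ _ hdisj
  rw [Set.Finite.mem_toFinset] at hzA hzB
  have hz1 : ∀ x : f.dom, radoGraph.Adj m ↑x → radoGraph.Adj z ↑(f.toEquiv x) := by
    intro x hx
    exact hzadj _ (Set.Finite.mem_toFinset _ |>.mpr ⟨x, hx, rfl⟩)
  have hz2 : ∀ x : f.dom, ¬radoGraph.Adj m ↑x → ¬radoGraph.Adj z ↑(f.toEquiv x) := by
    intro x hx
    exact hznadj _ (Set.Finite.mem_toFinset _ |>.mpr ⟨x, hx, rfl⟩)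
  have hzC : z ∉ f.cod := by
    intro hz
    by_cases hadj : radoGraph.Adj m ↑(f.toEquiv.symm ⟨z, hz⟩)
    · exact hzA ⟨_, hadj, by simp⟩
    · exact hzB ⟨_, hadj, by simp⟩
  set dom' := gsub (insert m ↑f.dom) with hdom'
  set cod' := gsub (insert z ↑f.cod) with hcod'
  have memD : ∀ x : dom', (↑x ∈ f.dom) ∨ (↑x : ℕ) = m := by
    intro x
    rcases x.2 with h | h
    · exact Or.inr h
    · exact Or.inl h
  have memC : ∀ y : cod', (↑y ∈ f.cod) ∨ (↑y : ℕ) = z := by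
    intro y
    rcases y.2 with h | h
    · exact Or.inr h
    · exact Or.inl h
  set F : dom' → cod' := fun x =>
    if h : (↑x : ℕ) ∈ f.dom then ⟨↑(f.toEquiv ⟨↑x, h⟩), Set.mem_insert_of_mem _ (f.toEquiv ⟨↑x, h⟩).2⟩
    else ⟨z, Set.mem_insert _ _⟩ with hF
  set Finv : cod' → dom' := fun y =>
    if h : (↑y : ℕ) ∈ f.cod then
      ⟨↑(f.toEquiv.symm ⟨↑y, h⟩), Set.mem_insert_of_mem _ (f.toEquiv.symm ⟨↑y, h⟩).2⟩
    else ⟨m, Set.mem_insert _ _⟩ with hFinv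
  have hFD : ∀ (x : dom') (h : (↑x : ℕ) ∈ f.dom), (↑(F x) : ℕ) = ↑(f.toEquiv ⟨↑x, h⟩) := by
    intro x h; simp only [hF, dif_pos h]
  have hleft : Function.LeftInverse Finv F := by
    intro x
    by_cases h : (↑x : ℕ) ∈ f.dom
    · have h2 : (↑(F x) : ℕ) ∈ f.cod := by rw [hFD x h]; exact (f.toEquiv ⟨↑x, h⟩).2
      apply Subtype.ext
      simp only [hFinv, dif_pos h2]
      have : (⟨↑(F x), h2⟩ : f.cod) = f.toEquiv ⟨↑x, h⟩ := Subtype.ext (hFD x h)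
      rw [this]; simp
    · have hx : (↑x : ℕ) = m := (memD x).resolve_left h
      have hFx : (↑(F x) : ℕ) = z := by simp only [hF, dif_neg h]
      apply Subtype.ext
      simp only [hFinv]
      rw [dif_neg (by rw [hFx]; exact hzC)]
      exact hx.symm
  have hright : Function.RightInverse Finv F := by
    intro y
    by_cases h : (↑y : ℕ) ∈ f.cod
    · have h2 : (↑(Finv y) : ℕ) ∈ f.dom := by
        simp only [hFinv, dif_pos h]; exact (f.toEquiv.symm ⟨↑y, h⟩).2
      apply Subtype.ext
      rw [hFD _ h2]
      have : (⟨↑(Finv y), h2⟩ : f.dom) = f.toEquiv.symm ⟨↑y, h⟩ := by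
        apply Subtype.ext; simp only [hFinv, dif_pos h]
      rw [this]; simp
    · have hy : (↑y : ℕ) = z := (memC y).resolve_left h
      have hFy : (↑(Finv y) : ℕ) = m := by simp only [hFinv, dif_neg h]
      apply Subtype.ext
      simp only [hF]
      rw [dif_neg (by rw [hFy]; exact hm)]
      exact hy.symm
  have key : ∀ u v : dom', radoGraph.Adj ↑(F u) ↑(F v) ↔ radoGraph.Adj ↑u ↑v := by
    intro u v
    by_cases hu : (↑u : ℕ) ∈ f.dom <;> by_cases hv : (↑v : ℕ) ∈ f.dom
    · rw [hFD u hu, hFD v hv]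
      exact equiv_adj f ⟨↑u, hu⟩ ⟨↑v, hv⟩
    · have hvm : (↑v : ℕ) = m := (memD v).resolve_left hv
      have hFv : (↑(F v) : ℕ) = z := by simp only [hF, dif_neg hv]
      rw [hFD u hu, hFv, hvm]
      rw [radoGraph.adj_comm, radoGraph.adj_comm _ m]
      constructor
      · intro hadj
        by_contra hnad
        exact hz2 ⟨↑u, hu⟩ hnad hadj
      · exact hz1 ⟨↑u, hu⟩
    · have hum : (↑u : ℕ) = m := (memD u).resolve_left hu
      have hFu : (↑(F u) : ℕ) = z := by simp only [hF, dif_neg hu]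
      rw [hFD v hv, hFu, hum]
      constructor
      · intro hadj
        by_contra hnad
        exact hz2 ⟨↑v, hv⟩ hnad hadj
      · exact hz1 ⟨↑v, hv⟩
    · have hum : (↑u : ℕ) = m := (memD u).resolve_left hu
      have hvm : (↑v : ℕ) = m := (memD v).resolve_left hv
      have hFu : (↑(F u) : ℕ) = z := by simp only [hF, dif_neg hu]
      have hFv : (↑(F v) : ℕ) = z := by simp only [hF, dif_neg hv]
      rw [hFu, hFv, hum, hvm]
      constructor <;> intro hc <;> exact absurd hc (radoGraph.loopless.irrefl _)
  refine ⟨⟨dom', cod', ⟨⟨F, Finv, hleft, hright⟩, fun {n} f' => isEmptyElim f', ?_⟩⟩, ?_, ?_, ?_⟩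
  · intro n r x
    match n, r with
    | 2, .adj => exact key (x 0) (x 1)
  · apply gsub_fg
    exact Set.Finite.insert _ hDfin
  · exact Set.mem_insert _ _
  · rw [PartialEquiv.le_iff]
    refine ⟨fun x hx => Set.mem_insert_of_mem _ hx, fun y hy => Set.mem_insert_of_mem _ hy, ?_⟩
    intro x
    apply Subtype.ext
    show (↑(f.toEquiv x) : ℕ) = ↑(F ⟨↑x, Set.mem_insert_of_mem _ x.2⟩)
    rw [hFD _ x.2]

lemma rado_isExtensionPair : Language.graph.IsExtensionPair ℕ ℕ := by
  intro f m
  by_cases hm : m ∈ f.1.dom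
  · exact ⟨f, hm, le_rfl⟩
  · obtain ⟨g, gfg, hmg, hfg⟩ := rado_extend_one f.1 f.2 m hm
    exact ⟨⟨g, gfg⟩, hmg, hfg⟩

lemma rado_homog (S T : Finset ℕ)
    (e : radoGraph.induce (S : Set ℕ) ≃g radoGraph.induce (T : Set ℕ)) :
    ∃ φ : radoGraph ≃g radoGraph, ∀ x : (S : Set ℕ), φ (x : ℕ) = ((e x : (T : Set ℕ)) : ℕ) := by
  classical
  set g0 : ℕ ≃ₚ[Language.graph] ℕ :=
    ⟨gsub (S : Set ℕ), gsub (T : Set ℕ),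
      ⟨e.toEquiv, fun {n} f => isEmptyElim f, by
        intro n r x
        match n, r with
        | 2, .adj => exact e.map_rel_iff' (a := x 0) (b := x 1)⟩⟩ with hg0
  have g0fg : g0.dom.FG := gsub_fg _ (S.finite_toSet)
  obtain ⟨F, hF⟩ := equiv_between_cg (Structure.cg_of_countable) (Structure.cg_of_countable)
    ⟨g0, g0fg⟩ rado_isExtensionPair rado_isExtensionPair
  refine ⟨⟨F.toEquiv, ?_⟩, ?_⟩
  · intro a b
    exact F.map_rel' adj ![a, b]
  · intro x
    rw [PartialEquiv.le_iff] at hF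
    obtain ⟨hdom, hcod, heq⟩ := hF
    have h2 := heq ⟨↑x, x.2⟩
    have h3 := congrArg Subtype.val h2
    simp only [Substructure.coe_inclusion] at h3
    exact h3.symm

open Classical in
noncomputable def rf (G : SimpleGraph ℕ) : ℕ → ℕ
  | n =>
    2 ^ (((Finset.range n).attach.sup fun m => rf G m.1) + 1) +
      ∑ m ∈ (Finset.range n).attach, if G.Adj m.1 n then 2 ^ rf G m.1 else 0
decreasing_by all_goals exact Finset.mem_range.mp m.2

noncomputable def rK (G : SimpleGraph ℕ) (n : ℕ) : ℕ :=
  ((Finset.range n).attach.sup fun m => rf G m.1) + 1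

open Classical in
lemma rf_def (G : SimpleGraph ℕ) (n : ℕ) :
    rf G n = 2 ^ rK G n +
      ∑ m ∈ (Finset.range n).attach, if G.Adj m.1 n then 2 ^ rf G m.1 else 0 := by
  rw [rf, rK]

lemma rf_lt_rK (G : SimpleGraph ℕ) {m n : ℕ} (h : m < n) : rf G m < rK G n := by
  have : rf G m ≤ (Finset.range n).attach.sup fun m => rf G m.1 :=
    Finset.le_sup (f := fun m : {x // x ∈ Finset.range n} => rf G m.1)
      (Finset.mem_attach _ ⟨m, Finset.mem_range.mpr h⟩)
  rw [rK]; omega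

open Classical in
lemma rK_le_rf (G : SimpleGraph ℕ) (n : ℕ) : 2 ^ rK G n ≤ rf G n := by
  rw [rf_def]; omega

lemma rf_mono (G : SimpleGraph ℕ) {m n : ℕ} (h : m < n) : rf G m < rf G n := by
  have h1 := rf_lt_rK G h
  have h2 := rK_le_rf G n
  have h3 : rK G n < 2 ^ rK G n := Nat.lt_two_pow_self
  omega

open Classical in
lemma rf_eq_sum (G : SimpleGraph ℕ) (n : ℕ) :
    rf G n = ∑ i ∈ insert (rK G n)
      (((Finset.range n).filter (fun m => G.Adj m n)).image (rf G)), 2 ^ i := by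
  classical
  have hinj : Set.InjOn (rf G) ((Finset.range n).filter (fun m => G.Adj m n)) := by
    intro a ha b hb hab
    by_contra hne
    rcases lt_or_gt_of_ne hne with h | h
    · exact absurd hab (Nat.ne_of_lt (rf_mono G h))
    · exact absurd hab.symm (Nat.ne_of_lt (rf_mono G h))
  have hK : rK G n ∉ ((Finset.range n).filter (fun m => G.Adj m n)).image (rf G) := by
    intro h
    obtain ⟨a, ha, hae⟩ := Finset.mem_image.mp h
    have := rf_lt_rK G (Finset.mem_range.mp (Finset.mem_filter.mp ha).1)
    omega
  rw [Finset.sum_insert hK, Finset.sum_image (fun a ha b hb => hinj ha hb), rf_def]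
  congr 1
  rw [Finset.sum_attach _ (fun m => if G.Adj m n then 2 ^ rf G m else 0), Finset.sum_filter]

open Classical in
lemma rf_testBit (G : SimpleGraph ℕ) (n j : ℕ) :
    Nat.testBit (rf G n) j =
      decide (j ∈ insert (rK G n)
        (((Finset.range n).filter (fun m => G.Adj m n)).image (rf G))) := by
  rw [rf_eq_sum]
  apply testBit_sum_pow (n := rK G n + 1)
  intro a ha
  rcases Finset.mem_insert.mp ha with rfl | ha
  · omega
  · obtain ⟨b, hb, rfl⟩ := Finset.mem_image.mp ha
    have := rf_lt_rK G (Finset.mem_range.mp (Finset.mem_filter.mp hb).1)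
    omega

lemma rf_adj (G : SimpleGraph ℕ) {m n : ℕ} (h : m < n) :
    radoGraph.Adj (rf G m) (rf G n) ↔ G.Adj m n := by
  classical
  have hmono := rf_mono G h
  have h1 : Nat.testBit (rf G m) (rf G n) = false := by
    apply Nat.testBit_eq_false_of_lt
    have := Nat.lt_two_pow_self (n := rf G n)
    omega
  have h2 : Nat.testBit (rf G n) (rf G m) = true ↔ G.Adj m n := by
    rw [rf_testBit]
    have hK := rf_lt_rK G h
    simp only [decide_eq_true_eq, Finset.mem_insert, Finset.mem_image, Finset.mem_filter,
      Finset.mem_range]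
    constructor
    · rintro (heq | ⟨a, ⟨ha, hadj⟩, hae⟩)
      · omega
      · have : a = m := by
          by_contra hne
          rcases lt_or_gt_of_ne hne with hlt | hlt
          · exact absurd hae (Nat.ne_of_lt (rf_mono G hlt))
          · exact absurd hae.symm (Nat.ne_of_lt (rf_mono G hlt))
        exact this ▸ hadj
    · intro hadj
      exact Or.inr ⟨m, ⟨h, hadj⟩, rfl⟩
  constructor
  · rintro ⟨hne, hbit | hbit⟩
    · rw [h1] at hbit; exact absurd hbit (by simp)
    · exact h2.mp hbit
  · intro hadj
    exact ⟨Nat.ne_of_lt hmono, Or.inr (h2.mpr hadj)⟩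

noncomputable def rfEmb (G : SimpleGraph ℕ) : G ↪g radoGraph where
  toFun := rf G
  inj' := fun a b hab => by
    by_contra hne
    rcases lt_or_gt_of_ne hne with h | h
    · exact absurd hab (Nat.ne_of_lt (rf_mono G h))
    · exact absurd hab.symm (Nat.ne_of_lt (rf_mono G h))
  map_rel_iff' := by
    intro a b
    rcases lt_trichotomy a b with h | rfl | h
    · exact rf_adj G h
    · simp
    · rw [radoGraph.adj_comm, G.adj_comm]
      exact rf_adj G h

lemma rado_universal (V : Type) [Countable V] (G : SimpleGraph V) :
    Nonempty (G ↪g radoGraph) := by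
  obtain ⟨ι⟩ := nonempty_embedding_nat V
  exact ⟨(rfEmb (G.map ι)).comp (SimpleGraph.Embedding.map ι G)⟩

/-- The Rado bit graph is ultrahomogeneous (every isomorphism between finite induced
subgraphs extends to an automorphism) and universal for countable graphs. -/
theorem radoGraph_ultrahomogeneous_and_universal :
    (∀ (S T : Finset ℕ)
      (e : radoGraph.induce (S : Set ℕ) ≃g radoGraph.induce (T : Set ℕ)),
      ∃ φ : radoGraph ≃g radoGraph, ∀ x : (S : Set ℕ), φ (x : ℕ) = ((e x : (T : Set ℕ)) : ℕ)) ∧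
    (∀ (V : Type) [Countable V] (G : SimpleGraph V), Nonempty (G ↪g radoGraph)) := by
  exact ⟨fun S T e => rado_homog S T e, fun V _ G => rado_universal V G⟩
end

section
/- Let E be the type of non-diagonal unordered pairs of natural numbers, and let μ be the product over E of Bernoulli(1/2) probability measures on Bool, a probability measure on the function space E → Bool. For f : E → Bool let G_f be the simple graph on ℕ in which distinct m and n are adjacent iff f assigns true to the unordered pair {m, n}. Then there exists a simple graph H on ℕ such that the set of f for which G_f is isomorphic to H has μ-measure 1. -/
open MeasureTheory ProbabilityTheory

/-- The index type of potential edges: non-diagonal unordered pairs of naturals. -/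
abbrev EdgeIdx : Type := {q : Sym2 ℕ // ¬ q.IsDiag}

/-- The graph on `ℕ` determined by an edge-indicator function `f`. -/
def graphOf (f : EdgeIdx → Bool) : SimpleGraph ℕ where
  Adj m n := m ≠ n ∧ ∃ e : EdgeIdx, (e : Sym2 ℕ) = s(m, n) ∧ f e = true
  symm := ⟨by
    rintro m n ⟨hmn, e, he, hf⟩
    exact ⟨hmn.symm, e, he.trans (Sym2.eq_swap), hf⟩⟩
  loopless := ⟨fun m ⟨h, _⟩ => h rfl⟩

/-- Extension property of a countable graph. -/
def ExtProp (G : SimpleGraph ℕ) : Prop :=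
  ∀ A B : Finset ℕ, Disjoint A B →
    ∃ v, v ∉ A ∧ v ∉ B ∧ (∀ a ∈ A, G.Adj v a) ∧ (∀ b ∈ B, ¬ G.Adj v b)

/-- Finite partial isomorphisms between graphs on ℕ. -/
structure PIso (G H : SimpleGraph ℕ) where
  dom : Finset ℕ
  toFun : ℕ → ℕ
  invFun : ℕ → ℕ
  left_inv : ∀ x ∈ dom, invFun (toFun x) = x
  adj : ∀ x ∈ dom, ∀ y ∈ dom, G.Adj x y ↔ H.Adj (toFun x) (toFun y)

namespace PIso

variable {G H : SimpleGraph ℕ}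

def ran (P : PIso G H) : Finset ℕ := P.dom.image P.toFun

def Le (P Q : PIso G H) : Prop :=
  P.dom ⊆ Q.dom ∧ (∀ x ∈ P.dom, Q.toFun x = P.toFun x) ∧
    (∀ y ∈ P.ran, Q.invFun y = P.invFun y)

lemma Le.refl (P : PIso G H) : Le P P := ⟨le_refl _, fun _ _ => rfl, fun _ _ => rfl⟩

lemma Le.trans {P Q R : PIso G H} (h1 : Le P Q) (h2 : Le Q R) : Le P R := by
  obtain ⟨hd1, ht1, hi1⟩ := h1
  obtain ⟨hd2, ht2, hi2⟩ := h2
  refine ⟨hd1.trans hd2, fun x hx => (ht2 x (hd1 hx)).trans (ht1 x hx), fun y hy => ?_⟩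
  have hy' : y ∈ Q.ran := by
    obtain ⟨x, hx, rfl⟩ := Finset.mem_image.1 hy
    exact Finset.mem_image.2 ⟨x, hd1 hx, ht1 x hx⟩
  exact (hi2 y hy').trans (hi1 y hy)

def symm (P : PIso G H) : PIso H G where
  dom := P.ran
  toFun := P.invFun
  invFun := P.toFun
  left_inv := by
    intro y hy
    obtain ⟨x, hx, rfl⟩ := Finset.mem_image.1 hy
    rw [P.left_inv x hx]
  adj := by
    intro y hy z hz
    obtain ⟨x, hx, rfl⟩ := Finset.mem_image.1 hy
    obtain ⟨w, hw, rfl⟩ := Finset.mem_image.1 hz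
    rw [P.left_inv x hx, P.left_inv w hw]
    exact (P.adj x hx w hw).symm

lemma ran_symm (P : PIso G H) : P.symm.ran = P.dom := by
  ext z
  constructor
  · intro hz
    obtain ⟨y, hy, rfl⟩ := Finset.mem_image.1 hz
    obtain ⟨x, hx, rfl⟩ := Finset.mem_image.1 hy
    show P.invFun (P.toFun x) ∈ P.dom
    rw [P.left_inv x hx]; exact hx
  · intro hz
    refine Finset.mem_image.2 ⟨P.toFun z, Finset.mem_image.2 ⟨z, hz, rfl⟩, P.left_inv z hz⟩

lemma Le.symm {P Q : PIso G H} (h : Le P Q) : Le P.symm Q.symm := by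
  obtain ⟨hd, ht, hi⟩ := h
  refine ⟨?_, hi, ?_⟩
  · intro y hy
    obtain ⟨x, hx, rfl⟩ := Finset.mem_image.1 hy
    exact Finset.mem_image.2 ⟨x, hd hx, ht x hx⟩
  · intro x hx
    rw [ran_symm] at hx
    show Q.toFun x = P.toFun x
    exact ht x hx

lemma le_symm_symm (P : PIso G H) : Le P P.symm.symm := by
  refine ⟨?_, fun _ _ => rfl, fun _ _ => rfl⟩
  show P.dom ⊆ P.symm.ran
  rw [ran_symm]

lemma exists_extend (hH : ExtProp H) (P : PIso G H) (x : ℕ) :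
    ∃ Q : PIso G H, Le P Q ∧ x ∈ Q.dom := by
  classical
  by_cases hx : x ∈ P.dom
  · exact ⟨P, Le.refl P, hx⟩
  have hinj : ∀ a ∈ P.dom, ∀ b ∈ P.dom, P.toFun a = P.toFun b → a = b := by
    intro a ha b hb hab
    rw [← P.left_inv a ha, hab, P.left_inv b hb]
  set A : Finset ℕ := (P.dom.filter (fun z => G.Adj x z)).image P.toFun with hA
  set B : Finset ℕ := (P.dom.filter (fun z => ¬ G.Adj x z)).image P.toFun with hB
  have hdisj : Disjoint A B := by
    rw [Finset.disjoint_left]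
    rintro y hy1 hy2
    obtain ⟨a, ha, rfl⟩ := Finset.mem_image.1 hy1
    obtain ⟨b, hb, hba⟩ := Finset.mem_image.1 hy2
    obtain ⟨ha1, ha2⟩ := Finset.mem_filter.1 ha
    obtain ⟨hb1, hb2⟩ := Finset.mem_filter.1 hb
    exact hb2 (hinj b hb1 a ha1 hba ▸ ha2)
  obtain ⟨v, hvA, hvB, hadjA, hadjB⟩ := hH A B hdisj
  have hvran : v ∉ P.ran := by
    intro hv
    obtain ⟨z, hz, rfl⟩ := Finset.mem_image.1 hv
    by_cases hadj : G.Adj x z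
    · exact hvA (Finset.mem_image.2 ⟨z, Finset.mem_filter.2 ⟨hz, hadj⟩, rfl⟩)
    · exact hvB (Finset.mem_image.2 ⟨z, Finset.mem_filter.2 ⟨hz, hadj⟩, rfl⟩)
  have hne : ∀ z ∈ P.dom, P.toFun z ≠ v := by
    intro z hz h
    exact hvran (h ▸ Finset.mem_image.2 ⟨z, hz, rfl⟩)
  refine ⟨⟨insert x P.dom, Function.update P.toFun x v, Function.update P.invFun v x, ?_, ?_⟩,
    ⟨Finset.subset_insert _ _, ?_, ?_⟩, Finset.mem_insert_self x _⟩
  · intro z hz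
    rcases Finset.mem_insert.1 hz with rfl | hz
    · rw [Function.update_self, Function.update_self]
    · have hzx : z ≠ x := fun h => hx (h ▸ hz)
      rw [Function.update_of_ne hzx, Function.update_of_ne (hne z hz), P.left_inv z hz]
  · intro z hz w hw
    have key : ∀ w ∈ P.dom, (G.Adj x w ↔ H.Adj v (P.toFun w)) := by
      intro w hw
      by_cases hadj : G.Adj x w
      · exact iff_of_true hadj
          (hadjA _ (Finset.mem_image.2 ⟨w, Finset.mem_filter.2 ⟨hw, hadj⟩, rfl⟩))
      · exact iff_of_false hadj
          (hadjB _ (Finset.mem_image.2 ⟨w, Finset.mem_filter.2 ⟨hw, hadj⟩, rfl⟩))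
    rcases Finset.mem_insert.1 hz with hz1 | hz
    · rcases Finset.mem_insert.1 hw with hw1 | hw
      · rw [hz1, hw1, Function.update_self]
        exact iff_of_false (G.irrefl) (H.irrefl)
      · have hwx : w ≠ x := fun h => hx (h ▸ hw)
        rw [hz1, Function.update_self, Function.update_of_ne hwx]
        exact key w hw
    · have hzx : z ≠ x := fun h => hx (h ▸ hz)
      rcases Finset.mem_insert.1 hw with hw1 | hw
      · rw [hw1, Function.update_self, Function.update_of_ne hzx, G.adj_comm, H.adj_comm]
        exact key z hz
      · have hwx : w ≠ x := fun h => hx (h ▸ hw)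
        rw [Function.update_of_ne hzx, Function.update_of_ne hwx]
        exact P.adj z hz w hw
  · intro z hz
    exact Function.update_of_ne (fun h => hx (by rwa [h] at hz)) _ _
  · intro y hy
    exact Function.update_of_ne (fun h => hvran (by rwa [h] at hy)) _ _

end PIso
variable {G H : SimpleGraph ℕ}

namespace PIso

noncomputable def chain (hG : ExtProp G) (hH : ExtProp H) : ℕ → PIso G H
  | 0 => ⟨∅, id, id, fun x hx => absurd hx (Finset.notMem_empty x),
      fun x hx => absurd hx (Finset.notMem_empty x)⟩
  | n + 1 =>
      (exists_extend hG (exists_extend hH (chain hG hH n) n).choose.symm n).choose.symm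

variable (hG : ExtProp G) (hH : ExtProp H)

lemma chain_succ (n : ℕ) :
    Le (chain hG hH n) (chain hG hH (n + 1)) ∧ n ∈ (chain hG hH (n + 1)).dom ∧
      n ∈ (chain hG hH (n + 1)).ran := by
  set P := chain hG hH n
  obtain ⟨h1, h2⟩ := (exists_extend hH P n).choose_spec
  set Q := (exists_extend hH P n).choose
  obtain ⟨h3, h4⟩ := (exists_extend hG Q.symm n).choose_spec
  set R := (exists_extend hG Q.symm n).choose
  have hchain : chain hG hH (n + 1) = R.symm := rfl
  refine ⟨?_, ?_, ?_⟩
  · rw [hchain]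
    exact (h1.trans (le_symm_symm Q)).trans (Le.symm h3)
  · rw [hchain]
    have : Q.symm.symm.dom ⊆ R.symm.dom := ((Le.symm h3)).1
    refine this ?_
    show n ∈ Q.symm.ran
    rw [ran_symm]
    exact h2
  · rw [hchain]
    show n ∈ R.symm.ran
    rw [ran_symm]
    exact h4

lemma chain_mono {m k : ℕ} (h : m ≤ k) : Le (chain hG hH m) (chain hG hH k) := by
  induction k with
  | zero => rw [Nat.le_zero.1 h]; exact Le.refl _
  | succ k ih =>
      rcases Nat.lt_or_ge m (k + 1) with h' | h'
      · exact (ih (Nat.lt_succ_iff.1 h')).trans (chain_succ hG hH k).1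
      · rw [le_antisymm h h']; exact Le.refl _

lemma chain_dom {m k : ℕ} (h : m < k) : m ∈ (chain hG hH k).dom :=
  (chain_mono hG hH h).1 (chain_succ hG hH m).2.1

lemma chain_ran {m k : ℕ} (h : m < k) : m ∈ (chain hG hH k).ran := by
  obtain ⟨x, hx, hxm⟩ := Finset.mem_image.1 (chain_succ hG hH m).2.2
  refine Finset.mem_image.2 ⟨x, (chain_mono hG hH h).1 hx, ?_⟩
  rw [(chain_mono hG hH h).2.1 x hx, hxm]

noncomputable def limF (n : ℕ) : ℕ := (chain hG hH (n + 1)).toFun n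
noncomputable def limFinv (n : ℕ) : ℕ := (chain hG hH (n + 1)).invFun n

lemma chain_toFun {m k : ℕ} (h : m < k) : (chain hG hH k).toFun m = limF hG hH m :=
  (chain_mono hG hH h).2.1 m (chain_succ hG hH m).2.1

lemma chain_invFun {m k : ℕ} (h : m < k) : (chain hG hH k).invFun m = limFinv hG hH m :=
  (chain_mono hG hH h).2.2 m (chain_succ hG hH m).2.2

lemma limF_left_inv (m : ℕ) : limFinv hG hH (limF hG hH m) = m := by
  set j := limF hG hH m with hj
  set k := max m j + 1 with hk
  have hm : m < k := Nat.lt_succ_of_le (le_max_left _ _)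
  have hjk : j < k := Nat.lt_succ_of_le (le_max_right _ _)
  have h1 : (chain hG hH k).toFun m = j := chain_toFun hG hH hm
  have h2 : (chain hG hH k).invFun j = limFinv hG hH j := chain_invFun hG hH hjk
  rw [← h2, ← h1, (chain hG hH k).left_inv m (chain_dom hG hH hm)]

lemma limF_right_inv (n : ℕ) : limF hG hH (limFinv hG hH n) = n := by
  obtain ⟨z, hz, hzn⟩ := Finset.mem_image.1 (chain_succ hG hH n).2.2
  have h1 : limFinv hG hH n = z := by
    have h0 := (chain hG hH (n + 1)).left_inv z hz
    rw [hzn] at h0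
    exact h0
  rw [h1]
  set k := max (n + 1) (z + 1) with hk
  have hzk : z < k := lt_of_lt_of_le (Nat.lt_succ_self z) (le_max_right _ _)
  have hnk : n + 1 ≤ k := le_max_left _ _
  calc limF hG hH z = (chain hG hH k).toFun z := (chain_toFun hG hH hzk).symm
    _ = (chain hG hH (n + 1)).toFun z := (chain_mono hG hH hnk).2.1 z hz
    _ = n := hzn

lemma limF_adj (m n : ℕ) : G.Adj m n ↔ H.Adj (limF hG hH m) (limF hG hH n) := by
  set k := max m n + 1 with hk
  have hm : m < k := Nat.lt_succ_of_le (le_max_left _ _)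
  have hn : n < k := Nat.lt_succ_of_le (le_max_right _ _)
  rw [← chain_toFun hG hH hm, ← chain_toFun hG hH hn]
  exact (chain hG hH k).adj m (chain_dom hG hH hm) n (chain_dom hG hH hn)

end PIso

theorem iso_of_extProp (hG : ExtProp G) (hH : ExtProp H) : Nonempty (G ≃g H) := by
  refine ⟨⟨⟨PIso.limF hG hH, PIso.limFinv hG hH, PIso.limF_left_inv hG hH,
    PIso.limF_right_inv hG hH⟩, ?_⟩⟩
  intro a b
  exact (PIso.limF_adj hG hH a b).symm
/-! ### Probability part -/

/-- Total function producing the edge index of `{m, n}` (junk value if `m = n`). -/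
def pe (m n : ℕ) : EdgeIdx :=
  if h : m = n then ⟨s(0, 1), by simp [Sym2.mk_isDiag_iff]⟩
  else ⟨s(m, n), by simp [Sym2.mk_isDiag_iff, h]⟩

lemma pe_coe {m n : ℕ} (h : m ≠ n) : (pe m n : Sym2 ℕ) = s(m, n) := by
  rw [pe, dif_neg h]

lemma graphOf_adj {f : EdgeIdx → Bool} {m n : ℕ} (h : m ≠ n) :
    (graphOf f).Adj m n ↔ f (pe m n) = true := by
  show (m ≠ n ∧ ∃ e : EdgeIdx, (e : Sym2 ℕ) = s(m, n) ∧ f e = true) ↔ f (pe m n) = true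
  constructor
  · rintro ⟨-, e, he, hf⟩
    have : e = pe m n := Subtype.ext (he.trans (pe_coe h).symm)
    rwa [← this]
  · intro hf
    exact ⟨h, pe m n, pe_coe h, hf⟩

lemma pe_eq_iff {v a w b : ℕ} (h1 : v ≠ a) (h2 : w ≠ b) :
    pe v a = pe w b ↔ (v = w ∧ a = b) ∨ (v = b ∧ a = w) := by
  rw [Subtype.ext_iff, pe_coe h1, pe_coe h2, Sym2.eq_iff]

/-- The event that `v` is joined correctly: to everything in `A`, to nothing in
`(A ∪ B) \ A`. -/
def GoodSet (A B : Finset ℕ) (v : ℕ) : Set (EdgeIdx → Bool) :=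
  {f | ∀ a ∈ A ∪ B, f (pe v a) = decide (a ∈ A)}

lemma measurableSet_goodSet (A B : Finset ℕ) (v : ℕ) : MeasurableSet (GoodSet A B v) := by
  have : GoodSet A B v = ⋂ a ∈ (A ∪ B : Finset ℕ),
      (fun f : EdgeIdx → Bool => f (pe v a)) ⁻¹' {decide (a ∈ A)} := by
    ext f
    simp [GoodSet, Set.mem_iInter]
  rw [this]
  exact MeasurableSet.biInter (Set.to_countable _)
    (fun a _ => (measurable_pi_apply _) (measurableSet_singleton _))

lemma measurableSet_boolpi {ι : Type*} [Finite ι] (s : Set (ι → Bool)) : MeasurableSet s := by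
  have hsing : ∀ g : ι → Bool, MeasurableSet {g} := by
    intro g
    have : {g} = ⋂ i, (fun f : ι → Bool => f i) ⁻¹' {g i} := by
      ext f
      simp [funext_iff]
    rw [this]
    exact MeasurableSet.iInter fun i => (measurable_pi_apply i) (measurableSet_singleton _)
  have : s = ⋃ g ∈ s, {g} := by simp
  rw [this]
  exact MeasurableSet.biUnion (Set.to_countable _) fun g _ => hsing g

lemma preimage_restrict (S : Finset EdgeIdx) (P : Set (EdgeIdx → Bool))
    (h : ∀ f g : EdgeIdx → Bool, (∀ e ∈ S, f e = g e) → f ∈ P → g ∈ P) :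
    (fun f : EdgeIdx → Bool => fun e : S => f e) ⁻¹'
      ((fun f : EdgeIdx → Bool => fun e : S => f e) '' P) = P := by
  ext g
  constructor
  · rintro ⟨f, hfP, hfg⟩
    exact h f g (fun e he => congrFun hfg ⟨e, he⟩) hfP
  · intro hg
    exact ⟨g, hg, rfl⟩

section Meas

variable (μ : Measure (EdgeIdx → Bool)) [IsProbabilityMeasure μ]

lemma coord_prob
    (hmarg : ∀ e : EdgeIdx, μ.map (fun f => f e) =
      (PMF.bernoulli (1 / 2) (by norm_num)).toMeasure)
    (e : EdgeIdx) (b : Bool) :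
    μ ((fun f : EdgeIdx → Bool => f e) ⁻¹' {b}) = 2⁻¹ := by
  have h := Measure.map_apply (measurable_pi_apply e) (measurableSet_singleton b)
    (μ := μ) (f := fun f : EdgeIdx → Bool => f e)
  rw [hmarg e] at h
  rw [← h, PMF.toMeasure_apply_singleton _ _ (measurableSet_singleton b),
    PMF.bernoulli_apply]
  cases b
  · simp only [cond_false]
    rw [ENNReal.coe_sub, one_div, ENNReal.coe_inv two_ne_zero]
    simpa using ENNReal.one_sub_inv_two
  · simp only [cond_true]
    rw [one_div]
    simp

lemma meas_goodSet
    (hindep : iIndepFun (fun e (f : EdgeIdx → Bool) => f e) μ)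
    (hmarg : ∀ e : EdgeIdx, μ.map (fun f => f e) =
      (PMF.bernoulli (1 / 2) (by norm_num)).toMeasure)
    (A B : Finset ℕ) {v : ℕ} (hv : ∀ a ∈ A ∪ B, v ≠ a) :
    μ (GoodSet A B v) = 2⁻¹ ^ (A ∪ B).card := by
  classical
  set C := A ∪ B with hC
  set sets : EdgeIdx → Set Bool := fun e => {b | ∀ a ∈ C, pe v a = e → b = decide (a ∈ A)}
    with hsets
  have hinj : ∀ a ∈ C, ∀ b ∈ C, pe v a = pe v b → a = b := by
    intro a ha b hb h
    rcases (pe_eq_iff (hv a ha) (hv b hb)).1 h with ⟨-, h⟩ | ⟨h1, -⟩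
    · exact h
    · exact absurd h1 (hv b hb)
  have hmeas : ∀ e : EdgeIdx, e ∈ C.image (pe v) → MeasurableSet (sets e) :=
    fun e _ => (Set.toFinite _).measurableSet
  have key := hindep.measure_inter_preimage_eq_mul (C.image (pe v)) hmeas
  have hL : (⋂ e ∈ C.image (pe v), (fun f : EdgeIdx → Bool => f e) ⁻¹' sets e)
      = GoodSet A B v := by
    ext f
    simp only [Set.mem_iInter, Set.mem_preimage, GoodSet, Set.mem_setOf_eq]
    constructor
    · intro hf a ha
      exact hf (pe v a) (Finset.mem_image.2 ⟨a, ha, rfl⟩) a ha rfl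
    · intro hf e he a ha hpa
      rw [← hpa]
      exact hf a ha
  have hsingle : ∀ a ∈ C, sets (pe v a) = {decide (a ∈ A)} := by
    intro a ha
    ext b
    simp only [hsets, Set.mem_setOf_eq, Set.mem_singleton_iff]
    constructor
    · intro h
      exact h a ha rfl
    · intro h a' ha' heq
      rw [hinj a' ha' a ha heq]
      exact h
  rw [hL] at key
  rw [key, Finset.prod_image hinj]
  have : ∀ a ∈ C, μ ((fun f : EdgeIdx → Bool => f (pe v a)) ⁻¹' sets (pe v a)) = 2⁻¹ := by
    intro a ha
    rw [hsingle a ha]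
    exact coord_prob μ hmarg _ _
  rw [Finset.prod_congr rfl this, Finset.prod_const]

end Meas
section Meas2

variable (μ : Measure (EdgeIdx → Bool)) [IsProbabilityMeasure μ]

lemma indep_of_det
    (hindep : iIndepFun (fun e (f : EdgeIdx → Bool) => f e) μ)
    (S T : Finset EdgeIdx) (hST : Disjoint S T)
    (P Q : Set (EdgeIdx → Bool))
    (hP : ∀ f g : EdgeIdx → Bool, (∀ e ∈ S, f e = g e) → f ∈ P → g ∈ P)
    (hQ : ∀ f g : EdgeIdx → Bool, (∀ e ∈ T, f e = g e) → f ∈ Q → g ∈ Q) :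
    μ (P ∩ Q) = μ P * μ Q := by
  have h := hindep.indepFun_finset S T hST (fun e => measurable_pi_apply e)
  have h2 := h.measure_inter_preimage_eq_mul
    ((fun f : EdgeIdx → Bool => fun e : S => f e) '' P)
    ((fun f : EdgeIdx → Bool => fun e : T => f e) '' Q)
    (measurableSet_boolpi _) (measurableSet_boolpi _)
  rwa [preimage_restrict S P hP, preimage_restrict T Q hQ] at h2

lemma bad_zero
    (hindep : iIndepFun (fun e (f : EdgeIdx → Bool) => f e) μ)
    (hmarg : ∀ e : EdgeIdx, μ.map (fun f => f e) =
      (PMF.bernoulli (1 / 2) (by norm_num)).toMeasure)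
    (A B : Finset ℕ) :
    μ (⋂ i : ℕ, (GoodSet A B ((A ∪ B).sup id + 1 + i))ᶜ) = 0 := by
  classical
  set C := A ∪ B with hC
  set M := C.sup id + 1 with hM
  set v : ℕ → ℕ := fun i => M + i with hv
  have hvC : ∀ i, ∀ a ∈ C, v i ≠ a := by
    intro i a ha
    have h1 : a ≤ C.sup id := Finset.le_sup (f := id) ha
    have h2 : C.sup id < v i := by
      show C.sup id < M + i
      omega
    exact (lt_of_le_of_lt h1 h2).ne'
  set c : ENNReal := 2⁻¹ ^ C.card with hc
  have hgood : ∀ i, μ (GoodSet A B (v i)) = c := fun i => meas_goodSet μ hindep hmarg A B (hvC i)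
  set Eset : ℕ → Finset EdgeIdx := fun i => C.image (pe (v i)) with hE
  have hEdisj : ∀ i j : ℕ, i ≠ j → Disjoint (Eset i) (Eset j) := by
    intro i j hij
    rw [Finset.disjoint_left]
    intro e hei hej
    obtain ⟨a, ha, rfl⟩ := Finset.mem_image.1 hei
    obtain ⟨b, hb, heq⟩ := Finset.mem_image.1 hej
    rcases (pe_eq_iff (hvC j b hb) (hvC i a ha)).1 heq with ⟨h1, -⟩ | ⟨h1, -⟩
    · have h2 : M + j = M + i := h1
      have h3 : i = j := by omega
      exact hij h3
    · exact hvC j a ha h1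
  have hdet : ∀ i, ∀ f g : EdgeIdx → Bool, (∀ e ∈ Eset i, f e = g e) →
      f ∈ GoodSet A B (v i) → g ∈ GoodSet A B (v i) := by
    intro i f g hagree hf a ha
    rw [← hagree (pe (v i) a) (Finset.mem_image.2 ⟨a, ha, rfl⟩)]
    exact hf a ha
  set R : ℕ → Set (EdgeIdx → Bool) := fun n => ⋂ i ∈ Finset.range n, (GoodSet A B (v i))ᶜ
    with hR
  have hRmeas : ∀ n, MeasurableSet (R n) :=
    fun n => MeasurableSet.biInter (Set.to_countable _)
      (fun i _ => (measurableSet_goodSet A B (v i)).compl)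
  have hRdet : ∀ n, ∀ f g : EdgeIdx → Bool,
      (∀ e ∈ (Finset.range n).biUnion Eset, f e = g e) → f ∈ R n → g ∈ R n := by
    intro n f g hagree hf
    simp only [hR, Set.mem_iInter] at hf ⊢
    intro i hi
    intro hgGood
    refine hf i hi ?_
    refine hdet i g f ?_ hgGood
    intro e he
    exact (hagree e (Finset.mem_biUnion.2 ⟨i, hi, he⟩)).symm
  have hmeasR : ∀ n, μ (R n) = (1 - c) ^ n := by
    intro n
    induction n with
    | zero =>
        simp only [hR, Finset.range_zero, pow_zero]
        simp
    | succ n ih =>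
        have hsplit : R (n + 1) = R n ∩ (GoodSet A B (v n))ᶜ := by
          simp only [hR, Finset.range_add_one]
          rw [Finset.set_biInter_insert]
          exact Set.inter_comm _ _
        have hindep2 : μ (R n ∩ GoodSet A B (v n)) = μ (R n) * c := by
          rw [← hgood n]
          refine indep_of_det μ hindep ((Finset.range n).biUnion Eset) (Eset n) ?_
            (R n) (GoodSet A B (v n)) (hRdet n) (hdet n)
          rw [Finset.disjoint_biUnion_left]
          intro i hi
          exact hEdisj i n (Finset.mem_range.1 hi).ne
        have hsum := measure_inter_add_diff (R n) (measurableSet_goodSet A B (v n)) (μ := μ)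
        have hdiff : R n \ GoodSet A B (v n) = R n ∩ (GoodSet A B (v n))ᶜ := Set.diff_eq _ _
        have : μ (R n ∩ (GoodSet A B (v n))ᶜ) = μ (R n) - μ (R n) * c := by
          rw [← hdiff]
          rw [hindep2] at hsum
          exact ENNReal.eq_sub_of_add_eq
            (ENNReal.mul_ne_top (measure_ne_top μ _)
              (ENNReal.pow_ne_top (ENNReal.inv_ne_top.2 two_ne_zero)))
            (by rw [add_comm]; exact hsum)
        rw [hsplit, this, ih]
        rw [pow_succ]
        rw [ENNReal.mul_sub (fun _ _ => ENNReal.pow_ne_top (by simp))]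
        rw [mul_one]
  have hsub : ∀ n, μ (⋂ i : ℕ, (GoodSet A B (v i))ᶜ) ≤ (1 - c) ^ n := by
    intro n
    rw [← hmeasR n]
    refine measure_mono ?_
    intro f hf
    simp only [hR, Set.mem_iInter]
    intro i _
    exact Set.mem_iInter.1 hf i
  have hc1 : 1 - c < 1 := by
    refine ENNReal.sub_lt_self ENNReal.one_ne_top one_ne_zero ?_
    simp only [hc]
    exact pow_ne_zero _ (by simp)
  have htend := ENNReal.tendsto_pow_atTop_nhds_zero_of_lt_one hc1
  have : μ (⋂ i : ℕ, (GoodSet A B (v i))ᶜ) ≤ 0 := ge_of_tendsto' htend hsub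
  exact le_antisymm this (zero_le)

lemma extProp_measure_one
    (hindep : iIndepFun (fun e (f : EdgeIdx → Bool) => f e) μ)
    (hmarg : ∀ e : EdgeIdx, μ.map (fun f => f e) =
      (PMF.bernoulli (1 / 2) (by norm_num)).toMeasure) :
    μ {f | ExtProp (graphOf f)} = 1 := by
  classical
  set Z : Finset ℕ × Finset ℕ → Set (EdgeIdx → Bool) := fun p =>
    ⋂ i : ℕ, (GoodSet p.1 p.2 ((p.1 ∪ p.2).sup id + 1 + i))ᶜ with hZ
  have hZ0 : ∀ p, μ (Z p) = 0 := fun p => bad_zero μ hindep hmarg p.1 p.2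
  have hU : μ (⋃ p, Z p) = 0 := measure_iUnion_null hZ0
  have hsub : {f | ExtProp (graphOf f)}ᶜ ⊆ ⋃ p, Z p := by
    intro f hf
    simp only [Set.mem_compl_iff, Set.mem_setOf_eq, ExtProp, not_forall] at hf
    obtain ⟨A, B, hf⟩ := hf
    obtain ⟨hd, hne⟩ := hf
    refine Set.mem_iUnion.2 ⟨(A, B), Set.mem_iInter.2 fun i hgood => ?_⟩
    set vv := (A ∪ B).sup id + 1 + i with hvv
    have hvC : ∀ a ∈ A ∪ B, vv ≠ a := by
      intro a ha
      have h1 : a ≤ (A ∪ B).sup id := Finset.le_sup (f := id) ha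
      have : a < vv := by omega
      exact this.ne'
    refine hne ⟨vv, ?_, ?_, ?_, ?_⟩
    · exact fun hvA => hvC vv (Finset.mem_union_left _ hvA) rfl
    · exact fun hvB => hvC vv (Finset.mem_union_right _ hvB) rfl
    · intro a ha
      rw [graphOf_adj (hvC a (Finset.mem_union_left _ ha))]
      rw [hgood a (Finset.mem_union_left _ ha)]
      simp [ha]
    · intro b hb hadj
      rw [graphOf_adj (hvC b (Finset.mem_union_right _ hb))] at hadj
      rw [hgood b (Finset.mem_union_right _ hb)] at hadj
      have : b ∉ A := Finset.disjoint_right.1 hd hb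
      simp [this] at hadj
  have hc0 : μ {f | ExtProp (graphOf f)}ᶜ = 0 :=
    le_antisymm (le_trans (measure_mono hsub) hU.le) (zero_le)
  have h1 : (1 : ENNReal) ≤ μ {f | ExtProp (graphOf f)} := by
    have hle := measure_union_le (μ := μ) {f | ExtProp (graphOf f)} {f | ExtProp (graphOf f)}ᶜ
    rw [Set.union_compl_self, hc0, add_zero, measure_univ] at hle
    exact hle
  exact le_antisymm prob_le_one h1

end Meas2

/-- Erdős–Rényi: a countable random graph with edges chosen independently with
probability `1/2` is almost surely isomorphic to one fixed graph `H`.  Here `μ` is the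
product over `EdgeIdx` of Bernoulli(1/2) measures on `Bool`, characterized as a
probability measure whose coordinate projections are independent and each distributed
according to the Bernoulli(1/2) measure. -/
theorem exists_almost_surely_isomorphic_graph
    (μ : Measure (EdgeIdx → Bool)) [IsProbabilityMeasure μ]
    (hindep : iIndepFun (fun e (f : EdgeIdx → Bool) => f e) μ)
    (hmarg : ∀ e : EdgeIdx, μ.map (fun f => f e) =
      (PMF.bernoulli (1 / 2) (by norm_num)).toMeasure) :
    ∃ H : SimpleGraph ℕ, μ {f | Nonempty (graphOf f ≃g H)} = 1 := by
  have h1 := extProp_measure_one μ hindep hmarg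
  have hne : {f | ExtProp (graphOf f)}.Nonempty := by
    rcases Set.eq_empty_or_nonempty {f | ExtProp (graphOf f)} with h | h
    · rw [h, measure_empty] at h1
      exact absurd h1 zero_ne_one
    · exact h
  obtain ⟨f0, hf0⟩ := hne
  refine ⟨graphOf f0, le_antisymm prob_le_one ?_⟩
  rw [← h1]
  exact measure_mono fun f hf => iso_of_extProp hf hf0
end

section
/- There exists a metric space U on a countable nonempty type such that: (i) the distance between any two points of U is a rational number; (ii) U is ultrahomogeneous, i.e., every distance-preserving bijection between two finite subsets of U extends to a bijective self-isometry of U; and (iii) U is universal, i.e., every metric space on a countable type all of whose distances are rational admits an isometric embedding into U. -/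
namespace RUry

/-- A rational-valued metric on `X`. -/
structure QMS (X : Type) : Type where
  d : X → X → ℚ
  refl : ∀ x, d x x = 0
  symm : ∀ x y, d x y = d y x
  triangle : ∀ x y z, d x z ≤ d x y + d y z
  sep : ∀ x y, d x y = 0 → x = y

variable {X : Type}

theorem QMS.nonneg (M : QMS X) (x y : X) : 0 ≤ M.d x y := by
  have h := M.triangle x y x
  rw [M.refl, M.symm y x] at h
  linarith

/-- Katětov function with finite support over a rational metric space. -/
def IsKat (M : QMS X) (f : X → ℚ) : Prop :=
  (∀ x y, f x ≤ f y + M.d x y) ∧ (∀ x y, M.d x y ≤ f x + f y) ∧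
    (∃ S : Finset X, S.Nonempty ∧ ∀ x, ∃ s ∈ S, f x = f s + M.d s x)

theorem IsKat.nonneg {M : QMS X} {f : X → ℚ} (hf : IsKat M f) (x : X) : 0 ≤ f x := by
  have := hf.2.1 x x; rw [M.refl] at this; linarith

/-- The one-step Katětov extension. -/
def Ext (M : QMS X) : Type := {f : X → ℚ // IsKat M f}

noncomputable def supp {M : QMS X} (f : Ext M) : Finset X := f.2.2.2.choose

theorem supp_nonempty {M : QMS X} (f : Ext M) : (supp f).Nonempty := f.2.2.2.choose_spec.1

theorem supp_spec {M : QMS X} (f : Ext M) (x : X) :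
    ∃ s ∈ supp f, f.1 x = f.1 s + M.d s x := f.2.2.2.choose_spec.2 x

/-- Distance on the Katětov extension. -/
noncomputable def Qd {M : QMS X} (f g : Ext M) : ℚ :=
  letI := Classical.decEq X
  (supp f ∪ supp g).sup' (by
      rcases supp_nonempty f with ⟨s, hs⟩
      exact ⟨s, Finset.mem_union_left _ hs⟩)
    (fun x => |f.1 x - g.1 x|)

theorem le_Qd {M : QMS X} (f g : Ext M) (x : X) : |f.1 x - g.1 x| ≤ Qd f g := by
  letI := Classical.decEq X
  rw [abs_sub_le_iff]
  constructor
  · rcases supp_spec g x with ⟨t, ht, hgx⟩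
    have h1 : f.1 x ≤ f.1 t + M.d t x := by
      have := f.2.1 x t; rwa [M.symm x t] at this
    have h2 : f.1 x - g.1 x ≤ f.1 t - g.1 t := by rw [hgx]; linarith
    calc f.1 x - g.1 x ≤ f.1 t - g.1 t := h2
      _ ≤ |f.1 t - g.1 t| := le_abs_self _
      _ ≤ Qd f g := by
        unfold Qd
        exact Finset.le_sup' (fun x => |f.1 x - g.1 x|) (Finset.mem_union_right _ ht)
  · rcases supp_spec f x with ⟨t, ht, hfx⟩
    have h1 : g.1 x ≤ g.1 t + M.d t x := by
      have := g.2.1 x t; rwa [M.symm x t] at this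
    have h2 : g.1 x - f.1 x ≤ g.1 t - f.1 t := by rw [hfx]; linarith
    calc g.1 x - f.1 x ≤ g.1 t - f.1 t := h2
      _ ≤ |f.1 t - g.1 t| := by rw [abs_sub_comm]; exact le_abs_self _
      _ ≤ Qd f g := by
        unfold Qd
        exact Finset.le_sup' (fun x => |f.1 x - g.1 x|) (Finset.mem_union_left _ ht)

theorem Qd_le {M : QMS X} (f g : Ext M) (c : ℚ) (h : ∀ x, |f.1 x - g.1 x| ≤ c) :
    Qd f g ≤ c := by
  unfold Qd
  exact Finset.sup'_le _ _ fun x _ => h x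

/-- The metric on the Katětov extension. -/
noncomputable def QMS.ext (M : QMS X) : QMS (Ext M) where
  d := Qd
  refl f := le_antisymm (Qd_le f f 0 (by simp)) (by
    rcases supp_nonempty f with ⟨s, hs⟩
    simpa using le_Qd f f s)
  symm f g := le_antisymm
    (Qd_le f g _ fun x => by rw [abs_sub_comm]; exact le_Qd g f x)
    (Qd_le g f _ fun x => by rw [abs_sub_comm]; exact le_Qd f g x)
  triangle f g h := Qd_le f h _ fun x =>
    calc |f.1 x - h.1 x| ≤ |f.1 x - g.1 x| + |g.1 x - h.1 x| := abs_sub_le _ _ _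
      _ ≤ Qd f g + Qd g h := add_le_add (le_Qd f g x) (le_Qd g h x)
  sep f g h := by
    apply Subtype.ext; funext x
    have h1 := le_Qd f g x
    rw [h] at h1
    have h2 := abs_nonpos_iff.mp h1
    linarith [sub_eq_zero.mp h2]

/-- The canonical embedding of `X` into its Katětov extension. -/
def emb (M : QMS X) (x : X) : Ext M :=
  ⟨fun y => M.d x y, by
    refine ⟨fun y z => ?_, fun y z => ?_, ⟨{x}, Finset.singleton_nonempty x, fun y => ?_⟩⟩
    · have := M.triangle x z y; rw [M.symm z y] at this; linarith
    · have := M.triangle y x z; rw [M.symm y x] at this; linarith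
    · exact ⟨x, Finset.mem_singleton_self x, by show M.d x y = M.d x x + M.d x y; rw [M.refl]; ring⟩⟩

@[simp] theorem emb_apply (M : QMS X) (x y : X) : (emb M x).1 y = M.d x y := rfl

theorem emb_isometry (M : QMS X) (x y : X) : Qd (emb M x) (emb M y) = M.d x y := by
  apply le_antisymm
  · apply Qd_le
    intro z
    rw [emb_apply, emb_apply, abs_sub_le_iff]
    constructor
    · have := M.triangle x y z; linarith
    · have := M.triangle y x z; rw [M.symm y x] at this; linarith
  · have h1 := le_Qd (emb M x) (emb M y) x
    rw [emb_apply, emb_apply, M.refl, zero_sub, abs_neg,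
      abs_of_nonneg (M.nonneg y x), M.symm y x] at h1
    exact h1

theorem Qd_emb {M : QMS X} (f : Ext M) (x : X) : Qd f (emb M x) = f.1 x := by
  apply le_antisymm
  · apply Qd_le
    intro z
    rw [emb_apply, abs_sub_le_iff]
    constructor
    · have h1 := f.2.1 z x; rw [M.symm z x] at h1; linarith
    · have h2 := f.2.2.1 x z; linarith
  · have h1 := le_Qd f (emb M x) x
    rw [emb_apply, M.refl, sub_zero, abs_of_nonneg (f.2.nonneg x)] at h1
    exact h1

instance ext_nonempty (M : QMS X) [Nonempty X] : Nonempty (Ext M) :=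
  ⟨emb M (Classical.arbitrary X)⟩


theorem kat_eq_inf {M : QMS X} (f : Ext M) (x : X) :
    f.1 x = (supp f).inf' (supp_nonempty f) (fun s => f.1 s + M.d s x) := by
  apply le_antisymm
  · apply Finset.le_inf'
    intro s _
    have := f.2.1 x s; rw [M.symm x s] at this; linarith
  · rcases supp_spec f x with ⟨s, hs, hfx⟩
    calc (supp f).inf' (supp_nonempty f) (fun s => f.1 s + M.d s x) ≤ f.1 s + M.d s x :=
        Finset.inf'_le _ hs
      _ = f.1 x := hfx.symm

theorem ext_countable {M : QMS X} [Countable X] : Countable (Ext M) := by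
  letI := Classical.decEq X
  letI := Classical.decEq (X × ℚ)
  have : Function.Injective (fun f : Ext M => (supp f).image (fun s => (s, f.1 s))) := by
    intro f g h
    simp only [] at h
    have hsupp : supp f = supp g := by
      have h2 := congrArg (Finset.image Prod.fst) h
      rwa [Finset.image_image, Finset.image_image,
        show (Prod.fst ∘ fun s => (s, f.1 s)) = id from rfl,
        show (Prod.fst ∘ fun s => (s, g.1 s)) = id from rfl,
        Finset.image_id, Finset.image_id] at h2
    have hval : ∀ s ∈ supp f, f.1 s = g.1 s := by
      intro s hs
      have hmem : (s, f.1 s) ∈ (supp g).image (fun s => (s, g.1 s)) := by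
        rw [← h]
        exact Finset.mem_image_of_mem _ hs
      rcases Finset.mem_image.mp hmem with ⟨t, _, ht⟩
      have : t = s := congrArg Prod.fst ht
      subst this
      exact (congrArg Prod.snd ht).symm
    apply Subtype.ext; funext x
    rw [kat_eq_inf f x, kat_eq_inf g x]
    apply le_antisymm
    · apply Finset.le_inf'
      intro s hs
      rw [← hsupp] at hs
      rw [← hval s hs]
      exact Finset.inf'_le _ hs
    · apply Finset.le_inf'
      intro s hs
      rw [hval s hs, hsupp] at *
      exact Finset.inf'_le _ hs
  exact Function.Injective.countable this

section KatOf

variable {M : QMS X} {n : ℕ} (hn : 0 < n) (p : Fin n → X) (q : Fin n → ℚ)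

/-- Build the Katětov function with prescribed distances `q i` to the points `p i`. -/
noncomputable def katOf (hA : ∀ i j, q i ≤ q j + M.d (p i) (p j))
    (hB : ∀ i j, M.d (p i) (p j) ≤ q i + q j) : Ext M := by
  haveI : Nonempty (Fin n) := ⟨⟨0, hn⟩⟩
  letI := Classical.decEq X
  refine ⟨fun x => Finset.univ.inf' Finset.univ_nonempty (fun i => q i + M.d (p i) x),
    ?_, ?_, ?_⟩
  · intro x y
    dsimp only
    obtain ⟨i, _, hi⟩ := Finset.exists_mem_eq_inf' Finset.univ_nonempty
      (fun i => q i + M.d (p i) y)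
    rw [hi]
    calc Finset.univ.inf' Finset.univ_nonempty (fun i => q i + M.d (p i) x)
        ≤ q i + M.d (p i) x := Finset.inf'_le _ (Finset.mem_univ i)
      _ ≤ q i + M.d (p i) y + M.d x y := by
          have := M.triangle (p i) y x; rw [M.symm y x] at this; linarith
  · intro x y
    dsimp only
    obtain ⟨i, _, hi⟩ := Finset.exists_mem_eq_inf' Finset.univ_nonempty
      (fun i => q i + M.d (p i) x)
    obtain ⟨j, _, hj⟩ := Finset.exists_mem_eq_inf' Finset.univ_nonempty
      (fun i => q i + M.d (p i) y)
    rw [hi, hj]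
    have h1 := M.triangle x (p i) (p j)
    have h2 := M.triangle x (p j) y
    have h3 := hB i j
    have h4 : M.d x (p i) = M.d (p i) x := M.symm _ _
    linarith
  · refine ⟨Finset.univ.image p, ⟨p ⟨0, hn⟩, Finset.mem_image_of_mem _ (Finset.mem_univ _)⟩,
      fun x => ?_⟩
    obtain ⟨i, _, hi⟩ := Finset.exists_mem_eq_inf' Finset.univ_nonempty
      (fun j => q j + M.d (p j) x)
    refine ⟨p i, Finset.mem_image_of_mem _ (Finset.mem_univ _), ?_⟩
    dsimp only
    have hq : Finset.univ.inf' Finset.univ_nonempty (fun j => q j + M.d (p j) (p i)) = q i := by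
      apply le_antisymm
      · calc Finset.univ.inf' Finset.univ_nonempty (fun j => q j + M.d (p j) (p i))
            ≤ q i + M.d (p i) (p i) := Finset.inf'_le _ (Finset.mem_univ i)
          _ = q i := by rw [M.refl]; ring
      · apply Finset.le_inf'
        intro j _
        have := hA i j; rw [M.symm (p i) (p j)] at this; linarith
    rw [hi, hq]

theorem katOf_apply (hA : ∀ i j, q i ≤ q j + M.d (p i) (p j))
    (hB : ∀ i j, M.d (p i) (p j) ≤ q i + q j) (i : Fin n) :
    (katOf hn p q hA hB).1 (p i) = q i := by
  haveI : Nonempty (Fin n) := ⟨⟨0, hn⟩⟩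
  show Finset.univ.inf' Finset.univ_nonempty (fun j => q j + M.d (p j) (p i)) = q i
  apply le_antisymm
  · calc Finset.univ.inf' Finset.univ_nonempty (fun j => q j + M.d (p j) (p i))
        ≤ q i + M.d (p i) (p i) := Finset.inf'_le _ (Finset.mem_univ i)
      _ = q i := by rw [M.refl]; ring
  · apply Finset.le_inf'
    intro j _
    have := hA i j; rw [M.symm (p i) (p j)] at this; linarith

end KatOf

/-- Metric on `PUnit`. -/
def punitQMS : QMS PUnit where
  d _ _ := 0
  refl _ := rfl
  symm _ _ := rfl
  triangle _ _ _ := by norm_num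
  sep x y _ := rfl

/-- The chain of iterated Katětov extensions. -/
noncomputable def St : ℕ → Σ X : Type, QMS X := fun n =>
  Nat.rec ⟨PUnit, punitQMS⟩ (fun _ p => ⟨Ext p.2, p.2.ext⟩) n

noncomputable abbrev Xn (n : ℕ) : Type := (St n).1
noncomputable abbrev Mn (n : ℕ) : QMS (Xn n) := (St n).2

theorem Xn_succ (n : ℕ) : Xn (n + 1) = Ext (Mn n) := rfl

noncomputable def toSucc {n : ℕ} (x : Xn n) : Xn (n + 1) := emb (Mn n) x

theorem toSucc_d {n : ℕ} (x y : Xn n) :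
    (Mn (n + 1)).d (toSucc x) (toSucc y) = (Mn n).d x y := emb_isometry (Mn n) x y

noncomputable def lift : ∀ {n m : ℕ}, n ≤ m → Xn n → Xn m := fun h x =>
  Nat.leRecOn h (fun {k} (y : Xn k) => toSucc y) x

theorem lift_self {n : ℕ} (h : n ≤ n) (x : Xn n) : lift h x = x := Nat.leRecOn_self x

theorem lift_succ {n m : ℕ} (h : n ≤ m) (h2 : n ≤ m + 1) (x : Xn n) :
    lift h2 x = toSucc (lift h x) := Nat.leRecOn_succ h x

theorem lift_trans {n m k : ℕ} (h1 : n ≤ m) (h2 : m ≤ k) (x : Xn n) :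
    lift h2 (lift h1 x) = lift (h1.trans h2) x := (Nat.leRecOn_trans h1 h2 x).symm

theorem lift_d {n m : ℕ} (h : n ≤ m) (x y : Xn n) :
    (Mn m).d (lift h x) (lift h y) = (Mn n).d x y := by
  induction m, h using Nat.le_induction with
  | base => rw [lift_self, lift_self]
  | succ m hm ih =>
      rw [lift_succ hm, lift_succ hm, toSucc_d, ih]


theorem Xn_countable (n : ℕ) : Countable (Xn n) := by
  induction n with
  | zero => exact inferInstanceAs (Countable PUnit)
  | succ n ih => exact @ext_countable _ (Mn n) ih

theorem Xn_nonempty (n : ℕ) : Nonempty (Xn n) := by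
  induction n with
  | zero => exact ⟨PUnit.unit⟩
  | succ n ih => exact ⟨emb (Mn n) ih.some⟩

theorem d_lift_lift {n m k k' : ℕ} (hn : n ≤ k) (hm : m ≤ k) (hn' : n ≤ k') (hm' : m ≤ k')
    (x : Xn n) (y : Xn m) :
    (Mn k).d (lift hn x) (lift hm y) = (Mn k').d (lift hn' x) (lift hm' y) := by
  have key : ∀ {a b : ℕ} (ha : n ≤ a) (hb : m ≤ a) (hab : a ≤ b),
      (Mn a).d (lift ha x) (lift hb y) =
        (Mn b).d (lift (ha.trans hab) x) (lift (hb.trans hab) y) := by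
    intro a b ha hb hab
    rw [← lift_trans ha hab, ← lift_trans hb hab, lift_d]
  rw [key hn hm (le_max_left k k'), key hn' hm' (le_max_right k k')]

/-- The underlying sigma type of the limit. -/
def U0 : Type := Σ n, Xn n

noncomputable def dd (a b : U0) : ℚ :=
  (Mn (max a.1 b.1)).d (lift (le_max_left _ _) a.2) (lift (le_max_right _ _) b.2)

theorem dd_eq (a b : U0) (k : ℕ) (h1 : a.1 ≤ k) (h2 : b.1 ≤ k) :
    dd a b = (Mn k).d (lift h1 a.2) (lift h2 b.2) := d_lift_lift _ _ _ _ _ _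

theorem dd_self (a : U0) : dd a a = 0 := by
  rw [dd_eq a a a.1 le_rfl le_rfl, lift_self, (Mn a.1).refl]

theorem dd_symm (a b : U0) : dd a b = dd b a := by
  rw [dd_eq a b (max a.1 b.1) (le_max_left _ _) (le_max_right _ _),
    dd_eq b a (max a.1 b.1) (le_max_right _ _) (le_max_left _ _), (Mn _).symm]

theorem dd_triangle (a b c : U0) : dd a c ≤ dd a b + dd b c := by
  set K := max a.1 (max b.1 c.1) with hK
  have ha : a.1 ≤ K := le_max_left _ _
  have hb : b.1 ≤ K := le_trans (le_max_left _ _) (le_max_right _ _)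
  have hc : c.1 ≤ K := le_trans (le_max_right _ _) (le_max_right _ _)
  rw [dd_eq a c K ha hc, dd_eq a b K ha hb, dd_eq b c K hb hc]
  exact (Mn K).triangle _ _ _

theorem dd_nonneg (a b : U0) : 0 ≤ dd a b := (Mn _).nonneg _ _

instance uSetoid : Setoid U0 where
  r a b := dd a b = 0
  iseqv := by
    refine ⟨dd_self, ?_, ?_⟩
    · intro a b h; rw [dd_symm]; exact h
    · intro a b c h1 h2
      have h3 := dd_triangle a b c
      have h4 := dd_nonneg a c
      rw [h1, h2] at h3
      linarith

/-- The rational Urysohn space. -/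
def Ury : Type := Quotient uSetoid

theorem dd_quad (a b a' b' : U0) (ha : dd a a' = 0) (hb : dd b b' = 0) :
    dd a b ≤ dd a' b' := by
  have h1 := dd_triangle a a' b
  have h2 := dd_triangle a' b' b
  have h3 : dd b' b = 0 := by rw [dd_symm]; exact hb
  rw [h3] at h2
  rw [ha] at h1
  linarith

noncomputable def dq : Ury → Ury → ℚ :=
  Quotient.lift₂ dd (by
    intro a b a' b' ha hb
    exact le_antisymm (dd_quad a b a' b' ha hb)
      (dd_quad a' b' a b ((uSetoid.iseqv.symm ha)) ((uSetoid.iseqv.symm hb))))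

theorem dq_mk (a b : U0) : dq ⟦a⟧ ⟦b⟧ = dd a b := rfl

/-- The rational metric on the limit. -/
noncomputable def MU : QMS Ury where
  d := dq
  refl := by rintro ⟨a⟩; exact dd_self a
  symm := by rintro ⟨a⟩ ⟨b⟩; exact dd_symm a b
  triangle := by rintro ⟨a⟩ ⟨b⟩ ⟨c⟩; exact dd_triangle a b c
  sep := by rintro ⟨a⟩ ⟨b⟩ h; exact Quotient.sound h

instance : Countable Ury := by
  haveI : ∀ n, Countable (Xn n) := Xn_countable
  haveI : Countable U0 := by unfold U0; infer_instance
  exact Quotient.countable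

instance : Nonempty Ury := ⟨⟦⟨0, (Xn_nonempty 0).some⟩⟧⟩

theorem Mn_succ_d (n : ℕ) (f g : Xn (n + 1)) : (Mn (n + 1)).d f g = Qd (M := Mn n) f g := rfl

/-- The extension property of the limit, with rational prescribed distances. -/
theorem ext_prop {n : ℕ} (hn : 0 < n) (p : Fin n → Ury) (q : Fin n → ℚ)
    (hA : ∀ i j, q i ≤ q j + MU.d (p i) (p j))
    (hB : ∀ i j, MU.d (p i) (p j) ≤ q i + q j) :
    ∃ z : Ury, ∀ i, MU.d z (p i) = q i := by
  haveI : Nonempty (Fin n) := ⟨⟨0, hn⟩⟩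
  set N : ℕ := Finset.univ.sup (fun i => (p i).out.1) with hN
  have hle : ∀ i, (p i).out.1 ≤ N := fun i =>
    Finset.le_sup (f := fun i => (p i).out.1) (Finset.mem_univ i)
  set p' : Fin n → Xn N := fun i => lift (hle i) (p i).out.2 with hp'
  have hd : ∀ i j, MU.d (p i) (p j) = (Mn N).d (p' i) (p' j) := by
    intro i j
    conv_lhs => rw [← Quotient.out_eq (p i), ← Quotient.out_eq (p j)]
    exact dd_eq _ _ N (hle i) (hle j)
  have hA' : ∀ i j, q i ≤ q j + (Mn N).d (p' i) (p' j) := by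
    intro i j; rw [← hd]; exact hA i j
  have hB' : ∀ i j, (Mn N).d (p' i) (p' j) ≤ q i + q j := by
    intro i j; rw [← hd]; exact hB i j
  set f : Ext (Mn N) := katOf hn p' q hA' hB' with hf
  refine ⟨⟦⟨N + 1, f⟩⟧, fun i => ?_⟩
  conv_lhs => rw [← Quotient.out_eq (p i)]
  have heq : MU.d ⟦(⟨N + 1, f⟩ : U0)⟧ ⟦(p i).out⟧ = dd ⟨N + 1, f⟩ (p i).out := rfl
  rw [heq, dd_eq ⟨N + 1, f⟩ (p i).out (N + 1) le_rfl ((hle i).trans (Nat.le_succ N)), lift_self,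
    lift_succ (hle i), Mn_succ_d]
  show Qd f (emb (Mn N) (p' i)) = q i
  rw [Qd_emb, hf, katOf_apply]


noncomputable instance : MetricSpace Ury where
  dist x y := (MU.d x y : ℝ)
  dist_self x := by show (MU.d x x : ℝ) = 0; rw [MU.refl]; norm_num
  dist_comm x y := by show (MU.d x y : ℝ) = (MU.d y x : ℝ); rw [MU.symm]
  dist_triangle x y z := by
    show (MU.d x z : ℝ) ≤ (MU.d x y : ℝ) + (MU.d y z : ℝ)
    exact_mod_cast MU.triangle x y z
  eq_of_dist_eq_zero {x y} h := MU.sep x y (by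
    have h2 : (MU.d x y : ℝ) = 0 := h
    exact_mod_cast h2)

theorem dist_eq (x y : Ury) : dist x y = (MU.d x y : ℝ) := rfl

theorem ury_rational : ∀ x y : Ury, ∃ q : ℚ, dist x y = (q : ℝ) := fun x y => ⟨MU.d x y, rfl⟩

/-- The extension property, real-valued form, with no positivity assumption. -/
theorem ext_prop_real {n : ℕ} (p : Fin n → Ury) (q : Fin n → ℚ)
    (hA : ∀ i j, (q i : ℝ) ≤ (q j : ℝ) + dist (p i) (p j))
    (hB : ∀ i j, dist (p i) (p j) ≤ (q i : ℝ) + (q j : ℝ)) :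
    ∃ z : Ury, ∀ i, dist z (p i) = (q i : ℝ) := by
  rcases Nat.eq_zero_or_pos n with hn | hn
  · subst hn
    exact ⟨Classical.arbitrary Ury, fun i => i.elim0⟩
  · have hA' : ∀ i j, q i ≤ q j + MU.d (p i) (p j) := by
      intro i j; have := hA i j; rw [dist_eq] at this; exact_mod_cast this
    have hB' : ∀ i j, MU.d (p i) (p j) ≤ q i + q j := by
      intro i j; have := hB i j; rw [dist_eq] at this; exact_mod_cast this
    rcases ext_prop hn p q hA' hB' with ⟨z, hz⟩
    exact ⟨z, fun i => by rw [dist_eq, hz]⟩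

section Universality

variable {Z : Type*} [MetricSpace Z] (hX : ∀ x y : Z, ∃ q : ℚ, dist x y = (q : ℝ)) (e : ℕ → Z)

/-- A rational value of the distance. -/
noncomputable def qdX (x y : Z) : ℚ := (hX x y).choose

theorem qdX_spec (x y : Z) : dist x y = (qdX hX x y : ℝ) := (hX x y).choose_spec

include hX

theorem uStep_ex (n : ℕ) (h : Fin n → Ury)
    (hInv : ∀ i j : Fin n, dist (h i) (h j) = dist (e i.1) (e j.1)) :
    ∃ z : Ury, ∀ i : Fin n, dist z (h i) = dist (e n) (e i.1) := by
  obtain ⟨z, hz⟩ := ext_prop_real h (fun i => qdX hX (e n) (e i.1))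
    (by
      intro i j
      rw [← qdX_spec hX, ← qdX_spec hX, hInv i j]
      exact dist_triangle_right _ _ _)
    (by
      intro i j
      rw [← qdX_spec hX, ← qdX_spec hX, hInv i j]
      exact dist_triangle_left _ _ _)
  exact ⟨z, fun i => (hz i).trans (qdX_spec hX (e n) (e i.1)).symm⟩

/-- Step of the universality recursion: add the image of `e n`. -/
noncomputable def uStep (n : ℕ) (h : Fin n → Ury) : Ury :=
  if hInv : ∀ i j : Fin n, dist (h i) (h j) = dist (e i.1) (e j.1) then
    (uStep_ex hX e n h hInv).choose
  else Classical.arbitrary Ury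

noncomputable def uH : (n : ℕ) → Fin n → Ury
  | 0 => Fin.elim0
  | n + 1 => Fin.snoc (uH n) (uStep hX e n (uH n))

theorem uH_castSucc (n : ℕ) (i : Fin n) : uH hX e (n + 1) i.castSucc = uH hX e n i := by
  rw [uH]; exact Fin.snoc_castSucc _ _ _

theorem uH_last (n : ℕ) : uH hX e (n + 1) (Fin.last n) = uStep hX e n (uH hX e n) := by
  rw [uH]; exact Fin.snoc_last _ _

theorem uH_mono {n m : ℕ} (h : n ≤ m) (i : Fin n) :
    uH hX e m (Fin.castLE h i) = uH hX e n i := by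
  induction m, h using Nat.le_induction with
  | base => rfl
  | succ m hm ih =>
      have : (Fin.castLE (Nat.le_succ_of_le hm) i) = (Fin.castLE hm i).castSucc := rfl
      rw [this, uH_castSucc, ih]

theorem uH_inv (n : ℕ) : ∀ i j : Fin n, dist (uH hX e n i) (uH hX e n j) = dist (e i.1) (e j.1) := by
  induction n with
  | zero => exact fun i => i.elim0
  | succ n ih =>
      have hstep : ∀ i : Fin n, dist (uStep hX e n (uH hX e n)) (uH hX e n i)
          = dist (e n) (e i.1) := by
        intro i
        unfold uStep
        rw [dif_pos ih]
        exact (uStep_ex hX e n (uH hX e n) ih).choose_spec i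
      intro i j
      induction i using Fin.lastCases with
      | last =>
          induction j using Fin.lastCases with
          | last => simp
          | cast j =>
              rw [uH_last, uH_castSucc, hstep j]
              simp [Fin.val_last]
      | cast i =>
          induction j using Fin.lastCases with
          | last =>
              rw [uH_last, uH_castSucc, dist_comm, hstep i, dist_comm]
              simp [Fin.val_last]
          | cast j =>
              rw [uH_castSucc, uH_castSucc, ih i j]
              rfl

theorem uH_val {n m : ℕ} (hnm : n < m) (i : Fin m) (hi : i.1 = n) :
    uH hX e m i = uH hX e (n + 1) (Fin.last n) := by
  have h1 : n + 1 ≤ m := hnm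
  have h2 : Fin.castLE h1 (Fin.last n) = i := by
    apply Fin.ext; simp [hi]
  rw [← h2, uH_mono hX e h1]

end Universality

theorem ury_universal (X : Type*) [MetricSpace X] [Countable X]
    (hX : ∀ x y : X, ∃ q : ℚ, dist x y = (q : ℝ)) :
    ∃ f : X → Ury, ∀ x y : X, dist (f x) (f y) = dist x y := by
  rcases isEmpty_or_nonempty X with hE | hNE
  · exact ⟨fun x => hE.elim x, fun x => (hE.elim x)⟩
  · obtain ⟨e, he⟩ := exists_surjective_nat X
    refine ⟨fun x => uH hX e ((he x).choose + 1) (Fin.last _), fun x y => ?_⟩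
    show dist (uH hX e ((he x).choose + 1) (Fin.last _))
      (uH hX e ((he y).choose + 1) (Fin.last _)) = dist x y
    set n := (he x).choose with hn
    set m := (he y).choose with hm
    set K := max (n + 1) (m + 1) with hK
    have h1 : n < K := lt_of_lt_of_le (Nat.lt_succ_self n) (le_max_left _ _)
    have h2 : m < K := lt_of_lt_of_le (Nat.lt_succ_self m) (le_max_right _ _)
    rw [← uH_val hX e h1 ⟨n, h1⟩ rfl, ← uH_val hX e h2 ⟨m, h2⟩ rfl, uH_inv hX e K]
    show dist (e n) (e m) = dist x y
    rw [(he x).choose_spec, (he y).choose_spec]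


section Homogeneity

variable (u : ℕ → Ury)

/-- Invariant: a sequence of pairs is a partial isometry. -/
def pInv {k : ℕ} (h : Fin k → Ury × Ury) : Prop :=
  ∀ i j, dist (h i).1 (h j).1 = dist (h i).2 (h j).2

theorem pInv_swap {k : ℕ} {h : Fin k → Ury × Ury} (hI : pInv h) :
    pInv (Prod.swap ∘ h) := fun i j => (hI i j).symm

theorem forth_ex (x : Ury) {k : ℕ} (h : Fin k → Ury × Ury) (hI : pInv h) :
    ∃ z : Ury, ∀ i, dist z ((h i).2) = dist x ((h i).1) := by
  obtain ⟨z, hz⟩ := ext_prop_real (fun i => (h i).2) (fun i => MU.d x ((h i).1))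
    (by
      intro i j
      show dist x ((h i).1) ≤ dist x ((h j).1) + dist ((h i).2) ((h j).2)
      rw [← hI i j]
      exact dist_triangle_right _ _ _)
    (by
      intro i j
      show dist ((h i).2) ((h j).2) ≤ dist x ((h i).1) + dist x ((h j).1)
      rw [← hI i j]
      exact dist_triangle_left _ _ _)
  exact ⟨z, fun i => hz i⟩

open Classical in
noncomputable def hStep (k : ℕ) {l : ℕ} (h : Fin l → Ury × Ury) : Ury × Ury :=
  if hI : pInv h then
    if k % 2 = 0 then
      (u (k / 2), (forth_ex (u (k / 2)) h hI).choose)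
    else
      ((forth_ex (u (k / 2)) (Prod.swap ∘ h) (pInv_swap hI)).choose, u (k / 2))
  else (Classical.arbitrary Ury, Classical.arbitrary Ury)

variable {m : ℕ} (s : Fin m → Ury × Ury)

noncomputable def HH : (k : ℕ) → Fin (m + k) → Ury × Ury
  | 0 => s
  | k + 1 => Fin.snoc (HH k) (hStep u k (HH k))

theorem HH_castSucc (k : ℕ) (i : Fin (m + k)) :
    HH u s (k + 1) i.castSucc = HH u s k i := by
  rw [HH]; exact Fin.snoc_castSucc _ _ _

theorem HH_last (k : ℕ) : HH u s (k + 1) (Fin.last (m + k)) = hStep u k (HH u s k) := by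
  rw [HH]; exact Fin.snoc_last _ _

theorem HH_mono {k k' : ℕ} (h : k ≤ k') (i : Fin (m + k)) :
    HH u s k' (Fin.castLE (by omega) i) = HH u s k i := by
  induction k', h using Nat.le_induction with
  | base => rfl
  | succ k' hk ih =>
      have : (Fin.castLE (by omega : m + k ≤ m + (k' + 1)) i)
          = (Fin.castLE (by omega : m + k ≤ m + k') i).castSucc := rfl
      rw [this, HH_castSucc, ih]

variable (hs : pInv s)
include hs

theorem HH_inv (k : ℕ) : pInv (HH u s k) := by
  induction k with
  | zero => exact hs
  | succ k ih =>
      have hnew : ∀ i : Fin (m + k),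
          dist (hStep u k (HH u s k)).1 ((HH u s k i).1)
            = dist (hStep u k (HH u s k)).2 ((HH u s k i).2) := by
        intro i
        unfold hStep
        rw [dif_pos ih]
        rcases Nat.even_or_odd k with hk | hk
        · rw [if_pos (Nat.even_iff.mp hk)]
          exact ((forth_ex (u (k / 2)) (HH u s k) ih).choose_spec i).symm
        · rw [if_neg (by rw [Nat.odd_iff.mp hk]; norm_num)]
          exact (forth_ex (u (k / 2)) (Prod.swap ∘ HH u s k) (pInv_swap ih)).choose_spec i
      intro i j
      induction i using Fin.lastCases with
      | last =>
          induction j using Fin.lastCases with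
          | last => simp only [Nat.add_eq]; rw [HH_last]; simp
          | cast j => simp only [Nat.add_eq]; rw [HH_last, HH_castSucc]; exact hnew j
      | cast i =>
          induction j using Fin.lastCases with
          | last =>
              simp only [Nat.add_eq]
              rw [HH_last, HH_castSucc, dist_comm, hnew i, dist_comm]
          | cast j =>
              simp only [Nat.add_eq]
              rw [HH_castSucc, HH_castSucc]; exact ih i j

/-- The full back-and-forth sequence of pairs. -/
noncomputable def total (j : ℕ) : Ury × Ury := HH u s (j + 1) ⟨j, by omega⟩

omit hs in
theorem total_eq (k : ℕ) (i : Fin (m + k)) : HH u s k i = total u s i.1 := by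
  set K := max k (i.1 + 1) with hK
  have h1 : k ≤ K := le_max_left _ _
  have h2 : i.1 + 1 ≤ K := le_max_right _ _
  have e1 := HH_mono u s (h1 : k ≤ K) i
  have e2 := HH_mono u s (h2 : i.1 + 1 ≤ K) ⟨i.1, by omega⟩
  rw [← e1]
  unfold total
  rw [← e2]
  congr 1

theorem gInv (i j : ℕ) :
    dist (total u s i).1 (total u s j).1 = dist (total u s i).2 (total u s j).2 := by
  have hi : i < m + (i + j + 2) := by omega
  have hj : j < m + (i + j + 2) := by omega
  have h1 := total_eq u s (i + j + 2) ⟨i, hi⟩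
  have h2 := total_eq u s (i + j + 2) ⟨j, hj⟩
  rw [← h1, ← h2]
  exact HH_inv u s hs (i + j + 2) ⟨i, hi⟩ ⟨j, hj⟩

theorem total_fst (t : ℕ) : (total u s (m + 2 * t)).1 = u t := by
  have hlt : m + 2 * t < m + (2 * t + 1) := by omega
  have h1 := total_eq u s (2 * t + 1) ⟨m + 2 * t, hlt⟩
  rw [← h1]
  have h2 : (⟨m + 2 * t, hlt⟩ : Fin (m + (2 * t + 1))) = Fin.last (m + 2 * t) := rfl
  rw [h2, HH_last]
  unfold hStep
  rw [dif_pos (HH_inv u s hs (2 * t)), if_pos (by omega : 2 * t % 2 = 0)]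
  show u (2 * t / 2) = u t
  congr 1
  omega

theorem total_snd (t : ℕ) : (total u s (m + 2 * t + 1)).2 = u t := by
  have hlt : m + 2 * t + 1 < m + (2 * t + 2) := by omega
  have h1 := total_eq u s (2 * t + 2) ⟨m + 2 * t + 1, hlt⟩
  rw [← h1]
  have h2 : (⟨m + 2 * t + 1, hlt⟩ : Fin (m + (2 * t + 2))) = Fin.last (m + (2 * t + 1)) := rfl
  rw [h2, HH_last]
  unfold hStep
  rw [dif_pos (HH_inv u s hs (2 * t + 1)), if_neg (by omega : ¬(2 * t + 1) % 2 = 0)]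
  show u ((2 * t + 1) / 2) = u t
  congr 1
  omega

end Homogeneity

theorem ury_homogeneous (S T : Finset Ury) (e : (S : Set Ury) ≃ (T : Set Ury))
    (hiso : ∀ x y : (S : Set Ury), dist ((e x : Ury)) ((e y : Ury)) = dist (x : Ury) (y : Ury)) :
    ∃ φ : Ury ≃ᵢ Ury, ∀ x : (S : Set Ury), φ (x : Ury) = ((e x) : Ury) := by
  obtain ⟨u, hu⟩ := exists_surjective_nat Ury
  set m := S.card with hm
  set σ : Fin m → (S : Set Ury) := fun i =>
    ⟨(S.equivFin.symm i : Ury), Finset.mem_coe.mpr (S.equivFin.symm i).2⟩ with hσ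
  set s : Fin m → Ury × Ury := fun i => ((σ i : Ury), (e (σ i) : Ury)) with hsdef
  have hs : pInv s := fun i j => (hiso (σ i) (σ j)).symm
  have cov1 : ∀ x : Ury, ∃ j : ℕ, (total u s j).1 = x := by
    intro x
    obtain ⟨t, ht⟩ := hu x
    exact ⟨m + 2 * t, by rw [total_fst u s hs t]; exact ht⟩
  have cov2 : ∀ y : Ury, ∃ j : ℕ, (total u s j).2 = y := by
    intro y
    obtain ⟨t, ht⟩ := hu y
    exact ⟨m + 2 * t + 1, by rw [total_snd u s hs t]; exact ht⟩
  set φ : Ury → Ury := fun x => (total u s (cov1 x).choose).2 with hφ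
  set ψ : Ury → Ury := fun y => (total u s (cov2 y).choose).1 with hψ
  have hφd : ∀ x y : Ury, dist (φ x) (φ y) = dist x y := by
    intro x y
    have h1 := (cov1 x).choose_spec
    have h2 := (cov1 y).choose_spec
    calc dist (φ x) (φ y)
        = dist (total u s (cov1 x).choose).2 (total u s (cov1 y).choose).2 := rfl
      _ = dist (total u s (cov1 x).choose).1 (total u s (cov1 y).choose).1 :=
          (gInv u s hs _ _).symm
      _ = dist x y := by rw [h1, h2]
  have hφψ : ∀ y : Ury, φ (ψ y) = y := by
    intro y
    have hj := (cov2 y).choose_spec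
    have hi := (cov1 (ψ y)).choose_spec
    have key : dist (φ (ψ y)) y = 0 := by
      calc dist (φ (ψ y)) y
          = dist (total u s (cov1 (ψ y)).choose).2 (total u s (cov2 y).choose).2 := by
            rw [hj]
        _ = dist (total u s (cov1 (ψ y)).choose).1 (total u s (cov2 y).choose).1 :=
            (gInv u s hs _ _).symm
        _ = dist (ψ y) (ψ y) := by rw [hi]
        _ = 0 := dist_self _
    exact dist_eq_zero.mp key
  have hψφ : ∀ x : Ury, ψ (φ x) = x := by
    intro x
    have hj := (cov1 x).choose_spec
    have hi := (cov2 (φ x)).choose_spec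
    have key : dist (ψ (φ x)) x = 0 := by
      calc dist (ψ (φ x)) x
          = dist (total u s (cov2 (φ x)).choose).1 (total u s (cov1 x).choose).1 := by
            rw [hj]
        _ = dist (total u s (cov2 (φ x)).choose).2 (total u s (cov1 x).choose).2 :=
            gInv u s hs _ _
        _ = dist (φ x) (φ x) := by rw [hi]
        _ = 0 := dist_self _
    exact dist_eq_zero.mp key
  refine ⟨⟨⟨φ, ψ, hψφ, hφψ⟩, Isometry.of_dist_eq hφd⟩, ?_⟩
  intro x
  set i : Fin m := S.equivFin ⟨(x : Ury), Finset.mem_coe.mp x.2⟩ with hi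
  have hσi : σ i = x := by
    apply Subtype.ext
    show (S.equivFin.symm (S.equivFin ⟨(x : Ury), _⟩) : Ury) = (x : Ury)
    rw [Equiv.symm_apply_apply]
  have hsi : s i = total u s i.1 := by
    have := total_eq u s 0 (⟨i.1, by omega⟩ : Fin (m + 0))
    calc s i = HH u s 0 ⟨i.1, by omega⟩ := rfl
      _ = total u s i.1 := total_eq u s 0 _
  have hjx := (cov1 (x : Ury)).choose_spec
  have key : dist (φ (x : Ury)) ((e x : Ury)) = 0 := by
    calc dist (φ (x : Ury)) ((e x : Ury))
        = dist (total u s (cov1 (x : Ury)).choose).2 (total u s i.1).2 := by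
          rw [← hsi]
          show dist (φ (x : Ury)) ((e x : Ury))
            = dist (total u s (cov1 (x : Ury)).choose).2 ((e (σ i) : Ury))
          rw [hσi]
      _ = dist (total u s (cov1 (x : Ury)).choose).1 (total u s i.1).1 :=
          (gInv u s hs _ _).symm
      _ = dist (x : Ury) (x : Ury) := by
          rw [hjx, ← hsi]
          show dist (x : Ury) ((σ i : Ury)) = dist (x : Ury) (x : Ury)
          rw [hσi]
      _ = 0 := dist_self _
  exact dist_eq_zero.mp key

end RUry


universe u

/-- A metric space has rational distances when every distance lies in the image of `ℚ`. -/
def RationalDistances (U : Type*) [MetricSpace U] : Prop :=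
  ∀ x y : U, ∃ q : ℚ, dist x y = (q : ℝ)

/-- A metric space is ultrahomogeneous when every distance-preserving bijection between
two finite subsets extends to a bijective self-isometry. -/
def UltrahomogeneousMS (U : Type*) [MetricSpace U] : Prop :=
  ∀ (S T : Finset U) (e : (S : Set U) ≃ (T : Set U)),
    (∀ x y : (S : Set U), dist ((e x : U)) ((e y : U)) = dist (x : U) (y : U)) →
    ∃ φ : U ≃ᵢ U, ∀ x : (S : Set U), φ (x : U) = ((e x) : U)

/-- A metric space `U` is universal for countable metric spaces with rational distances
when each such space admits an isometric embedding into `U`. -/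
def UniversalForRationalMS (U : Type*) [MetricSpace U] : Prop :=
  ∀ (X : Type u) [MetricSpace X] [Countable X], RationalDistances X →
    ∃ f : X → U, ∀ x y : X, dist (f x) (f y) = dist x y

/-- The rational Urysohn space exists: a countable nonempty metric space with rational
distances which is ultrahomogeneous and universal for countable metric spaces with
rational distances. -/
theorem exists_rational_urysohn_space :
    ∃ (U : Type) (m : MetricSpace U), Countable U ∧ Nonempty U ∧
      @RationalDistances U m ∧ @UltrahomogeneousMS U m ∧ @UniversalForRationalMS.{u} U m := by
  refine ⟨RUry.Ury, inferInstance, inferInstance, inferInstance, RUry.ury_rational, ?_, ?_⟩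
  · intro S T e hiso
    exact RUry.ury_homogeneous S T e hiso
  · intro X _ _ hX
    exact RUry.ury_universal X hX
end

section
/- Let 𝒲 be the set of finite sets A of finite words over the alphabet {0,1} (lists of Booleans) such that no two distinct words W, W' in A satisfy that W' is a prefix of W, ordered by: A ≤ B iff for every W ∈ A there exists W' ∈ B such that W' is a prefix of W. Then (𝒲, ≤) is a partial order, and it is universal: for every partial order P on a countable type there is a map f : P → 𝒲 such that p ≤ q if and only if f p ≤ f q. -/
open Classical

section AuxChain
variable {P : Type} [PartialOrder P]

/-- Recursively built clopen-like regions of Cantor space realizing a countable poset. -/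
noncomputable def chainV (r : ℕ → Option P) : ℕ → Set (ℕ → Bool)
  | n =>
    match r n with
    | none => ∅
    | some p =>
        {x | ∃ j, ∃ _ : j < n, ∃ q, r j = some q ∧ q ≤ p ∧ x ∈ chainV r j} ∪
        ({x | ∀ j, j < n → ∀ q, r j = some q → p ≤ q → x ∈ chainV r j} ∩ {x | x n = true})

lemma chainV_none {r : ℕ → Option P} {n : ℕ} (h : r n = none) : chainV r n = ∅ := by
  rw [chainV, h]

lemma chainV_some {r : ℕ → Option P} {n : ℕ} {p : P} (h : r n = some p) :
    chainV r n =
      {x | ∃ j, ∃ _ : j < n, ∃ q, r j = some q ∧ q ≤ p ∧ x ∈ chainV r j} ∪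
      ({x | ∀ j, j < n → ∀ q, r j = some q → p ≤ q → x ∈ chainV r j} ∩ {x | x n = true}) := by
  rw [chainV, h]

lemma chainV_depth {r : ℕ → Option P} :
    ∀ n, ∀ x y : ℕ → Bool, (∀ i ≤ n, x i = y i) → x ∈ chainV r n → y ∈ chainV r n := by
  intro n
  induction n using Nat.strong_induction_on with
  | _ n ih =>
    intro x y hxy hx
    cases hr : r n with
    | none => rw [chainV_none hr] at hx; exact absurd hx (Set.notMem_empty x)
    | some p =>
      rw [chainV_some hr] at hx ⊢
      rcases hx with ⟨j, hj, q, hrj, hqp, hxj⟩ | ⟨hall, hxn⟩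
      · exact Or.inl ⟨j, hj, q, hrj, hqp, ih j hj x y (fun i hi => hxy i (hi.trans hj.le)) hxj⟩
      · refine Or.inr ⟨fun j hj q hrj hpq => ih j hj x y (fun i hi => hxy i (hi.trans hj.le))
          (hall j hj q hrj hpq), ?_⟩
        have := hxy n le_rfl
        simpa [← this] using hxn

lemma chainV_mono_lt {r : ℕ → Option P} {a b : ℕ} {p q : P}
    (hab : a < b) (ha : r a = some p) (hb : r b = some q) (hpq : p ≤ q) :
    chainV r a ⊆ chainV r b := by
  intro x hx
  rw [chainV_some hb]
  exact Or.inl ⟨a, hab, p, ha, hpq, hx⟩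

lemma chainV_mono {r : ℕ → Option P} :
    ∀ a b : ℕ, ∀ p q : P, r a = some p → r b = some q → p ≤ q →
      chainV r a ⊆ chainV r b := by
  intro a
  induction a using Nat.strong_induction_on with
  | _ a ih =>
    intro b p q ha hb hpq
    rcases lt_trichotomy a b with h | h | h
    · exact chainV_mono_lt h ha hb hpq
    · subst h
      have hpq2 : p = q := by rw [ha] at hb; exact Option.some.inj hb
      subst hpq2
      exact subset_rfl
    · intro x hx
      rw [chainV_some ha] at hx
      rcases hx with ⟨j, hj, q', hrj, hq'p, hxj⟩ | ⟨hall, _⟩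
      · rcases lt_trichotomy j b with h2 | h2 | h2
        · exact chainV_mono_lt h2 hrj hb (hq'p.trans hpq) hxj
        · subst h2
          have hq2 : q' = q := by rw [hrj] at hb; exact Option.some.inj hb
          subst hq2
          exact hxj
        · exact ih j hj b q' q hrj hb (hq'p.trans hpq) hxj
      · exact hall b h q hb hpq

end AuxChain


section sep
variable {P : Type} [PartialOrder P]

lemma chainV_update {r : ℕ → Option P} {j n : ℕ} (h : j < n) (b : Bool) (x : ℕ → Bool) :
    x ∈ chainV r j ↔ Function.update x n b ∈ chainV r j := by
  constructor
  · exact chainV_depth j _ _ (fun i hi => (Function.update_of_ne (by omega) b x).symm)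
  · exact chainV_depth j _ _ (fun i hi => (Function.update_of_ne (by omega) b x))

lemma chainV_sep {r : ℕ → Option P} :
    ∀ n (S T : Finset ℕ), (∀ s ∈ S, s < n) → (∀ t ∈ T, t < n) →
    (∀ s ∈ S, (r s).isSome) → (∀ t ∈ T, (r t).isSome) →
    (∀ s ∈ S, ∀ t ∈ T, ∀ p q : P, r s = some p → r t = some q → ¬ p ≤ q) →
    ∃ x : ℕ → Bool, (∀ s ∈ S, x ∈ chainV r s) ∧ (∀ t ∈ T, x ∉ chainV r t) := by
  intro n
  induction n with
  | zero =>
    intro S T hS hT _ _ _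
    exact ⟨fun _ => false, fun s hs => absurd (hS s hs) (Nat.not_lt_zero s),
      fun t ht => absurd (hT t ht) (Nat.not_lt_zero t)⟩
  | succ n ih =>
    intro S T hS hT hSd hTd hrel
    by_cases hnS : n ∈ S
    · by_cases hnT : n ∈ T
      · obtain ⟨p, hp⟩ := Option.isSome_iff_exists.mp (hSd n hnS)
        exact absurd le_rfl (hrel n hnS n hnT p p hp hp)
      · -- n ∈ S \ T : add the upper family, then set bit n to true
        obtain ⟨p, hp⟩ := Option.isSome_iff_exists.mp (hSd n hnS)
        set famU := (Finset.range n).filter (fun j => ∃ q : P, r j = some q ∧ p ≤ q) with hfamU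
        have hmemU : ∀ j, j ∈ famU ↔ j < n ∧ ∃ q : P, r j = some q ∧ p ≤ q := by
          intro j; simp [hfamU]
        obtain ⟨x, hx1, hx2⟩ := ih (S.erase n ∪ famU) T
          (by
            intro s hs
            rcases Finset.mem_union.mp hs with hs | hs
            · have := Finset.mem_erase.mp hs
              have := hS s this.2; omega
            · exact ((hmemU s).mp hs).1)
          (by intro t ht; have := hT t ht; have : t ≠ n := fun h => hnT (h ▸ ht); omega)
          (by
            intro s hs
            rcases Finset.mem_union.mp hs with hs | hs
            · exact hSd s (Finset.mem_erase.mp hs).2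
            · obtain ⟨q, hq, _⟩ := ((hmemU s).mp hs).2
              simp [hq])
          hTd
          (by
            intro s hs t ht p' q' hrs hrt hle
            rcases Finset.mem_union.mp hs with hs | hs
            · exact hrel s (Finset.mem_erase.mp hs).2 t ht p' q' hrs hrt hle
            · obtain ⟨q, hq, hpq⟩ := ((hmemU s).mp hs).2
              rw [hrs] at hq
              have : q = p' := (Option.some.inj hq).symm
              subst this
              exact hrel n hnS t ht p q' hp hrt (hpq.trans hle))
        refine ⟨Function.update x n true, ?_, ?_⟩
        · intro s hs
          by_cases hsn : s = n
          · subst hsn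
            rw [chainV_some hp]
            refine Or.inr ⟨?_, by simp⟩
            intro j hj q hrj hpq
            have hjU : j ∈ famU := (hmemU j).mpr ⟨hj, q, hrj, hpq⟩
            exact (chainV_update hj true x).mp (hx1 j (Finset.mem_union_right _ hjU))
          · have hsS' : s ∈ S.erase n ∪ famU :=
              Finset.mem_union_left _ (Finset.mem_erase.mpr ⟨hsn, hs⟩)
            have hslt : s < n := by have := hS s hs; omega
            exact (chainV_update hslt true x).mp (hx1 s hsS')
        · intro t ht
          have htn : t ≠ n := fun h => hnT (h ▸ ht)
          have htlt : t < n := by have := hT t ht; omega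
          intro hmem
          exact hx2 t ht ((chainV_update htlt true x).mpr hmem)
    · by_cases hnT : n ∈ T
      · -- n ∈ T \ S : add the lower family to T, then set bit n to false
        obtain ⟨p, hp⟩ := Option.isSome_iff_exists.mp (hTd n hnT)
        set famL := (Finset.range n).filter (fun j => ∃ q : P, r j = some q ∧ q ≤ p) with hfamL
        have hmemL : ∀ j, j ∈ famL ↔ j < n ∧ ∃ q : P, r j = some q ∧ q ≤ p := by
          intro j; simp [hfamL]
        obtain ⟨x, hx1, hx2⟩ := ih S (T.erase n ∪ famL)
          (by intro s hs; have := hS s hs; have : s ≠ n := fun h => hnS (h ▸ hs); omega)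
          (by
            intro t ht
            rcases Finset.mem_union.mp ht with ht | ht
            · have h1 := Finset.mem_erase.mp ht
              have := hT t h1.2; omega
            · exact ((hmemL t).mp ht).1)
          hSd
          (by
            intro t ht
            rcases Finset.mem_union.mp ht with ht | ht
            · exact hTd t (Finset.mem_erase.mp ht).2
            · obtain ⟨q, hq, _⟩ := ((hmemL t).mp ht).2
              simp [hq])
          (by
            intro s hs t ht p' q' hrs hrt hle
            rcases Finset.mem_union.mp ht with ht | ht
            · exact hrel s hs t (Finset.mem_erase.mp ht).2 p' q' hrs hrt hle
            · obtain ⟨q, hq, hqp⟩ := ((hmemL t).mp ht).2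
              rw [hrt] at hq
              have : q = q' := (Option.some.inj hq).symm
              subst this
              exact hrel s hs n hnT p' p hrs hp (hle.trans hqp))
        refine ⟨Function.update x n false, ?_, ?_⟩
        · intro s hs
          have hslt : s < n := by
            have := hS s hs; have : s ≠ n := fun h => hnS (h ▸ hs); omega
          exact (chainV_update hslt false x).mp (hx1 s hs)
        · intro t ht
          by_cases htn : t = n
          · subst htn
            rw [chainV_some hp]
            rintro (⟨j, hj, q, hrj, hqp, hxj⟩ | ⟨-, hxn⟩)
            · have hjL : j ∈ famL := (hmemL j).mpr ⟨hj, q, hrj, hqp⟩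
              exact hx2 j (Finset.mem_union_right _ hjL) ((chainV_update hj false x).mpr hxj)
            · simp at hxn
          · have htlt : t < n := by have := hT t ht; omega
            intro hmem
            exact hx2 t (Finset.mem_union_left _ (Finset.mem_erase.mpr ⟨htn, ht⟩))
              ((chainV_update htlt false x).mpr hmem)
      · -- n in neither
        exact ih S T
          (by intro s hs; have := hS s hs; have : s ≠ n := fun h => hnS (h ▸ hs); omega)
          (by intro t ht; have := hT t ht; have : t ≠ n := fun h => hnT (h ▸ ht); omega)
          hSd hTd hrel

end sep


/-- `A` is a finite antichain of binary words under the prefix relation. -/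
def WAntichain (A : Finset (List Bool)) : Prop :=
  ∀ W ∈ A, ∀ W' ∈ A, W ≠ W' → ¬ W' <+: W

/-- The order on finite sets of binary words: `A ≤ B` iff every word of `A` has a
prefix belonging to `B`. -/
def Wle (A B : Finset (List Bool)) : Prop :=
  ∀ W ∈ A, ∃ W' ∈ B, W' <+: W

def cone (w : List Bool) : Set (ℕ → Bool) := {x | ∀ i, (h : i < w.length) → x i = w[i]}

def minCut (V : Set (ℕ → Bool)) : Set (List Bool) :=
  {w | cone w ⊆ V ∧ ∀ u, u <+: w → u ≠ w → ¬ cone u ⊆ V}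

/-- `V` depends only on coordinates `< d`. -/
def DepthLE (V : Set (ℕ → Bool)) (d : ℕ) : Prop :=
  ∀ x y : ℕ → Bool, (∀ i < d, x i = y i) → x ∈ V → y ∈ V

lemma cone_anti {u w : List Bool} (h : u <+: w) : cone w ⊆ cone u := by
  intro x hx i hi
  have hi' : i < w.length := lt_of_lt_of_le hi h.length_le
  rw [hx i hi', h.getElem hi]

lemma minCut_length_le {V : Set (ℕ → Bool)} {d : ℕ} (hd : DepthLE V d) {w : List Bool}
    (hw : w ∈ minCut V) : w.length ≤ d := by
  by_contra hlen
  push_neg at hlen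
  have htake : cone (w.take d) ⊆ V := by
    intro x hx
    set y : ℕ → Bool := fun i => if h : i < w.length then w[i] else x i with hy
    have hyw : y ∈ cone w := by intro i hi; simp [hy, hi]
    have hyV : y ∈ V := hw.1 hyw
    refine hd y x ?_ hyV
    intro i hi
    have hiw : i < w.length := hi.trans hlen
    have h1 : y i = w[i] := by simp [hy, hiw]
    have h2 : x i = w[i] := by
      have h3 : i < (w.take d).length := by simp [List.length_take]; omega
      have := hx i h3
      rwa [List.getElem_take] at this
    rw [h1, h2]
  exact hw.2 (w.take d) (List.take_prefix d w)
    (fun h => by have := congrArg List.length h; simp [List.length_take] at this; omega) htake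

lemma minCut_finite {V : Set (ℕ → Bool)} {d : ℕ} (hd : DepthLE V d) :
    (minCut V).Finite :=
  (List.finite_length_le Bool d).subset (fun w hw => minCut_length_le hd hw)

lemma exists_min_prefix {V : Set (ℕ → Bool)} :
    ∀ (n : ℕ) (w : List Bool), w.length ≤ n → cone w ⊆ V →
      ∃ u, u <+: w ∧ u ∈ minCut V := by
  intro n
  induction n using Nat.strong_induction_on with
  | _ n ih =>
    intro w hw hc
    by_cases h : ∃ u, u <+: w ∧ u ≠ w ∧ cone u ⊆ V
    · obtain ⟨u, hu, hne, hcu⟩ := h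
      have hlt : u.length < w.length := by
        rcases lt_or_eq_of_le hu.length_le with h1 | h1
        · exact h1
        · exact absurd (List.IsPrefix.eq_of_length hu h1) hne
      obtain ⟨u', hu', hmin⟩ := ih u.length (by omega) u le_rfl hcu
      exact ⟨u', hu'.trans hu, hmin⟩
    · push_neg at h
      exact ⟨w, List.prefix_refl w, hc, h⟩

lemma minCut_cover {V : Set (ℕ → Bool)} {d : ℕ} (hd : DepthLE V d) {x : ℕ → Bool}
    (hx : x ∈ V) : ∃ w ∈ minCut V, x ∈ cone w := by
  set w0 : List Bool := List.ofFn (fun i : Fin d => x i) with hw0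
  have hxw0 : x ∈ cone w0 := by
    intro i hi
    simp [hw0] at hi ⊢
  have hcw0 : cone w0 ⊆ V := by
    intro y hy
    refine hd x y ?_ hx
    intro i hi
    have h1 := hxw0 i (by simp [hw0]; exact hi)
    have h2 := hy i (by simp [hw0]; exact hi)
    rw [h1, h2]
  obtain ⟨u, hu, hmin⟩ := exists_min_prefix w0.length w0 le_rfl hcw0
  exact ⟨u, hmin, cone_anti hu hxw0⟩

lemma minCut_union {V : Set (ℕ → Bool)} {d : ℕ} (hd : DepthLE V d) :
    V = ⋃ w ∈ minCut V, cone w := by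
  ext x
  constructor
  · intro hx
    obtain ⟨w, hw, hxw⟩ := minCut_cover hd hx
    exact Set.mem_biUnion hw hxw
  · intro hx
    obtain ⟨w, hw, hxw⟩ := Set.mem_iUnion₂.mp hx
    exact hw.1 hxw

noncomputable def minFinset (V : Set (ℕ → Bool)) (d : ℕ) (hd : DepthLE V d) :
    Finset (List Bool) := (minCut_finite hd).toFinset

lemma minFinset_mem {V : Set (ℕ → Bool)} {d : ℕ} (hd : DepthLE V d) (w : List Bool) :
    w ∈ minFinset V d hd ↔ w ∈ minCut V := Set.Finite.mem_toFinset _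

lemma minFinset_antichain {V : Set (ℕ → Bool)} {d : ℕ} (hd : DepthLE V d) :
    WAntichain (minFinset V d hd) := by
  intro W hW W' hW' hne hpre
  rw [minFinset_mem] at hW hW'
  exact hW.2 W' hpre (fun h => hne h.symm) hW'.1

lemma wle_iff_subset {V V' : Set (ℕ → Bool)} {d d' : ℕ} (hd : DepthLE V d)
    (hd' : DepthLE V' d') :
    Wle (minFinset V d hd) (minFinset V' d' hd') ↔ V ⊆ V' := by
  constructor
  · intro hle x hx
    obtain ⟨w, hw, hxw⟩ := minCut_cover hd hx
    obtain ⟨u, hu, hupre⟩ := hle w ((minFinset_mem hd w).mpr hw)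
    rw [minFinset_mem] at hu
    exact hu.1 (cone_anti hupre hxw)
  · intro hsub w hw
    rw [minFinset_mem] at hw
    have : cone w ⊆ V' := hw.1.trans hsub
    obtain ⟨u, hu, hmin⟩ := exists_min_prefix w.length w le_rfl this
    exact ⟨u, (minFinset_mem hd' u).mpr hmin, hu⟩

lemma wle_refl_aux (A : Finset (List Bool)) : Wle A A :=
  fun W hW => ⟨W, hW, List.prefix_refl W⟩

lemma wle_trans_aux (A B C : Finset (List Bool)) (hAB : Wle A B) (hBC : Wle B C) :
    Wle A C := by
  intro W hW
  obtain ⟨W', hW', h1⟩ := hAB W hW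
  obtain ⟨W'', hW'', h2⟩ := hBC W' hW'
  exact ⟨W'', hW'', h2.trans h1⟩

lemma wle_subset_aux (A B : Finset (List Bool)) (hA : WAntichain A)
    (hAB : Wle A B) (hBA : Wle B A) : A ⊆ B := by
  intro W hW
  obtain ⟨W', hW', h1⟩ := hAB W hW
  obtain ⟨W'', hW'', h2⟩ := hBA W' hW'
  have h3 : W'' <+: W := h2.trans h1
  have hWW : W = W'' := by
    by_contra hne
    exact hA W hW W'' hW'' hne h3
  subst hWW
  have hlen : W'.length = W.length := le_antisymm h1.length_le h2.length_le
  have : W' = W := h1.eq_of_length hlen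
  rwa [← this]

lemma universal_aux (P : Type) [Countable P] [PartialOrder P] :
    ∃ f : P → Finset (List Bool), (∀ p, WAntichain (f p)) ∧
      ∀ p q : P, p ≤ q ↔ Wle (f p) (f q) := by
  obtain ⟨e, he⟩ := countable_iff_exists_injective P |>.mp ‹Countable P›
  set r : ℕ → Option P := Function.partialInv e with hrdef
  have hr : ∀ p, r (e p) = some p := fun p => Function.partialInv_left he p
  have hdepth : ∀ n, DepthLE (chainV r n) (n + 1) := by
    intro n x y hxy hx
    exact chainV_depth n x y (fun i hi => hxy i (by omega)) hx
  refine ⟨fun p => minFinset (chainV r (e p)) (e p + 1) (hdepth _),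
    fun p => minFinset_antichain _, ?_⟩
  intro p q
  rw [wle_iff_subset]
  constructor
  · exact fun hpq => chainV_mono (e p) (e q) p q (hr p) (hr q) hpq
  · intro hsub
    by_contra hnot
    obtain ⟨x, hx1, hx2⟩ := chainV_sep (r := r) (max (e p) (e q) + 1) {e p} {e q}
      (by intro s hs; simp at hs; subst hs; omega)
      (by intro t ht; simp at ht; subst ht; omega)
      (by intro s hs; simp at hs; subst hs; simp [hr p])
      (by intro t ht; simp at ht; subst ht; simp [hr q])
      (by
        intro s hs t ht p' q' hrs hrt
        simp at hs ht
        subst hs; subst ht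
        rw [hr p] at hrs
        rw [hr q] at hrt
        have h1 : p = p' := Option.some.inj hrs
        have h2 : q = q' := Option.some.inj hrt
        subst h1; subst h2
        exact hnot)
    exact hx2 (e q) (by simp) (hsub (hx1 (e p) (by simp)))

/-- `(𝒲, ≤)` is a partial order (reflexive, transitive and antisymmetric on antichains)
and is universal for countable partial orders. -/
theorem W_partialOrder_and_universal :
    (∀ A : Finset (List Bool), WAntichain A → Wle A A) ∧
    (∀ A B C : Finset (List Bool), WAntichain A → WAntichain B → WAntichain C →
      Wle A B → Wle B C → Wle A C) ∧
    (∀ A B : Finset (List Bool), WAntichain A → WAntichain B →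
      Wle A B → Wle B A → A = B) ∧
    (∀ (P : Type) [Countable P] [PartialOrder P],
      ∃ f : P → Finset (List Bool), (∀ p, WAntichain (f p)) ∧
        ∀ p q : P, p ≤ q ↔ Wle (f p) (f q)) := by
  refine ⟨fun A _ => wle_refl_aux A, fun A B C _ _ _ => wle_trans_aux A B C, ?_, ?_⟩
  · intro A B hA hB hAB hBA
    exact Finset.Subset.antisymm (wle_subset_aux A B hA hAB hBA)
      (wle_subset_aux B A hB hBA hAB)
  · intro P _ _
    exact universal_aux P
end

section
/- In the partial order (𝒲, ≤), a pair A < B is a gap (i.e., A < B and there is no C ∈ 𝒲 with A < C < B) if and only if there exists a word W ∈ B such that both one-letter extensions W++[0] and W++[1] belong to A and A \ {W++[0], W++[1]} = B \ {W}. -/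
private lemma pre_antisymm {l t : List Bool} (h1 : l <+: t) (h2 : t <+: l) : l = t :=
  h1.eq_of_length (Nat.le_antisymm h1.length_le h2.length_le)

private lemma concat_cases {l t : List Bool} {c : Bool} (h : l <+: t ++ [c]) :
    l <+: t ∨ l = t ++ [c] := by
  rw [List.prefix_concat_iff] at h; tauto

/-- If `Wle A B` and `B` is an antichain, then an element of `A` which is a prefix of
an element of `B` must equal it. -/
private lemma eq_of_prefix {A B : Finset (List Bool)} (hAB : Wle A B) (hB : WAntichain B)
    {a b : List Bool} (ha : a ∈ A) (hb : b ∈ B) (h : a <+: b) : a = b := by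
  obtain ⟨p, hp, hpa⟩ := hAB a ha
  have hpb : p = b := by
    by_contra hne
    exact hB b hb p hp (fun e => hne e.symm) (hpa.trans h)
  subst hpb
  exact pre_antisymm h hpa

/-- Characterization of gaps in `(𝒲, ≤)`: `A < B` is a gap iff `B` arises from `A`
by replacing the two one-letter extensions `W ++ [0]`, `W ++ [1]` (members of `A`)
by the single word `W`. -/
theorem W_gap_iff (A B : Finset (List Bool)) (hA : WAntichain A) (hB : WAntichain B) :
    (Wle A B ∧ A ≠ B ∧
      ¬ ∃ C : Finset (List Bool), WAntichain C ∧ (Wle A C ∧ A ≠ C) ∧ (Wle C B ∧ C ≠ B)) ↔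
    ∃ W ∈ B, (W ++ [false]) ∈ A ∧ (W ++ [true]) ∈ A ∧
      A \ {W ++ [false], W ++ [true]} = B \ {W} := by
  classical
  constructor
  · -- forward direction
    rintro ⟨hAB, hABne, hnC⟩
    by_contra hR
    -- first: B \ A is nonempty
    have hBA : ∃ b ∈ B, b ∉ A := by
      by_contra h
      push_neg at h
      apply hABne
      apply Finset.Subset.antisymm _ h
      intro a haA
      obtain ⟨p, hpB, hpa⟩ := hAB a haA
      have hpA : p ∈ A := h p hpB
      have : p = a := by
        by_contra hne
        exact hA a haA p hpA (fun e => hne e.symm) hpa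
      exact this ▸ hpB
    obtain ⟨b, hbB, hbA⟩ := hBA
    by_cases hEx : ∃ a ∈ A, b <+: a
    · -- there is an extension of b in A; take a longest one
      set S : Finset (List Bool) := A.filter (fun x => b <+: x) with hS
      have hSne : S.Nonempty := by
        obtain ⟨a, haA, hba⟩ := hEx
        exact ⟨a, by simp [hS, haA, hba]⟩
      obtain ⟨a, haS, hmax⟩ := S.exists_max_image List.length hSne
      have haA : a ∈ A := (Finset.mem_filter.mp haS).1
      have hba : b <+: a := (Finset.mem_filter.mp haS).2
      have hab : a ≠ b := fun h => hbA (h ▸ haA)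
      have hanil : a ≠ [] := by
        rintro rfl
        exact hab (List.prefix_nil.mp hba).symm
      obtain ⟨t, c, rfl⟩ : ∃ t c, a = t ++ [c] := by
        rcases List.eq_nil_or_concat a with h | ⟨t, c, h⟩
        · exact absurd h hanil
        · exact ⟨t, c, by simpa using h⟩
      have hbt : b <+: t := by
        rcases concat_cases hba with h | h
        · exact h
        · exact absurd h.symm hab
      have htA : t ∉ A := by
        intro h
        exact hA (t ++ [c]) haA t h (by simp) (List.prefix_append _ _)
      by_cases ha' : t ++ [!c] ∈ A
      · -- merge the pair into t
        set C : Finset (List Bool) := insert t ((A.erase (t ++ [c])).erase (t ++ [!c])) with hC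
        have haC : t ++ [c] ∉ C := by
          simp [hC]
        have hCA : ∀ x ∈ C, x ≠ t → x ∈ A ∧ x ≠ t ++ [c] ∧ x ≠ t ++ [!c] := by
          intro x hx hxt
          rcases Finset.mem_insert.mp hx with h | h
          · exact absurd h hxt
          · have h1 := Finset.mem_of_mem_erase h
            exact ⟨Finset.mem_of_mem_erase h1, Finset.ne_of_mem_erase h1,
              Finset.ne_of_mem_erase h⟩
        have hext : ∀ x ∈ A, t <+: x → x = t ++ [c] ∨ x = t ++ [!c] := by
          intro x hxA htx
          obtain ⟨s, rfl⟩ := htx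
          match s with
          | [] => exact absurd (by simpa using hxA) htA
          | d :: s' =>
            have hdA : t ++ [d] ∈ A := by
              cases c <;> cases d <;> first | simpa using haA | simpa using ha'
            have hpre : t ++ [d] <+: t ++ d :: s' := ⟨s', by simp⟩
            have : t ++ d :: s' = t ++ [d] := by
              by_contra hne
              exact hA _ hxA _ hdA hne hpre
            rw [this]
            cases c <;> cases d <;> simp
        have hCanti : WAntichain C := by
          intro x hx y hy hxy hpre
          by_cases hxt : x = t
          · rw [hxt] at hpre
            have hy' := hCA y hy (fun h => hxy (by rw [hxt, h]))
            have hyA : y <+: t ++ [c] := hpre.trans (List.prefix_append _ _)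
            have hl : y.length ≤ t.length := hpre.length_le
            have hyne : (t ++ [c]) ≠ y := by
              rintro rfl; simp at hl
            exact hA (t ++ [c]) haA y hy'.1 hyne hyA
          · by_cases hyt : y = t
            · rw [hyt] at hpre
              have hx' := hCA x hx hxt
              rcases hext x hx'.1 hpre with h | h
              · exact hx'.2.1 h
              · exact hx'.2.2 h
            · have hx' := hCA x hx hxt
              have hy' := hCA y hy hyt
              exact hA x hx'.1 y hy'.1 hxy hpre
        have hWleAC : Wle A C := by
          intro z hzA
          by_cases h1 : z = t ++ [c]
          · exact ⟨t, Finset.mem_insert_self _ _, h1 ▸ List.prefix_append _ _⟩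
          by_cases h2 : z = t ++ [!c]
          · exact ⟨t, Finset.mem_insert_self _ _, h2 ▸ List.prefix_append _ _⟩
          · exact ⟨z, Finset.mem_insert_of_mem (Finset.mem_erase.mpr ⟨h2,
              Finset.mem_erase.mpr ⟨h1, hzA⟩⟩), List.prefix_refl _⟩
        have hAneC : A ≠ C := by
          intro h
          rw [h] at haA
          exact haC haA
        have hWleCB : Wle C B := by
          intro x hx
          by_cases hxt : x = t
          · exact ⟨b, hbB, hxt ▸ hbt⟩
          · exact hAB x (hCA x hx hxt).1
        have hCneB : C ≠ B := by
          intro h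
          apply hR
          refine ⟨t, h ▸ Finset.mem_insert_self _ _, ?_, ?_, ?_⟩
          · cases c
            · simpa using haA
            · simpa using ha'
          · cases c
            · simpa using ha'
            · simpa using haA
          · rw [← h]
            have hpair : ({t ++ [false], t ++ [true]} : Finset (List Bool)) =
                {t ++ [c], t ++ [!c]} := by
              cases c
              · simp
              · simp [Finset.pair_comm]
            rw [hpair]
            ext x
            simp only [Finset.mem_sdiff, Finset.mem_insert, Finset.mem_singleton, hC,
              Finset.mem_erase]
            constructor
            · rintro ⟨hxA, hne⟩
              push_neg at hne
              refine ⟨Or.inr ⟨hne.2, hne.1, hxA⟩, fun h => htA (h ▸ hxA)⟩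
            · rintro ⟨h | ⟨h1, h2, h3⟩, hxt⟩
              · exact absurd h hxt
              · exact ⟨h3, by push_neg; exact ⟨h2, h1⟩⟩
        exact hnC ⟨C, hCanti, ⟨hWleAC, hAneC⟩, hWleCB, hCneB⟩
      · -- sibling missing: insert it
        set C : Finset (List Bool) := insert (t ++ [!c]) A with hC
        have hCanti : WAntichain C := by
          intro x hx y hy hxy hpre
          rcases Finset.mem_insert.mp hx with hx1 | hxA
          · subst hx1
            rcases Finset.mem_insert.mp hy with hy1 | hyA
            · exact hxy hy1.symm
            · rcases concat_cases hpre with h | h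
              · have hyt : y <+: t ++ [c] := h.trans (List.prefix_append _ _)
                have : y.length ≤ t.length := h.length_le
                have hyne : (t ++ [c]) ≠ y := by rintro rfl; simp at this
                exact hA (t ++ [c]) haA y hyA hyne hyt
              · exact ha' (h ▸ hyA)
          · rcases Finset.mem_insert.mp hy with hy1 | hyA
            · subst hy1
              -- x ∈ A extends t ++ [!c]; maximality forces x = t ++ [!c] ∈ A, contradiction
              have hbx : b <+: x := hbt.trans ((List.prefix_append _ _).trans hpre)
              have hxS : x ∈ S := Finset.mem_filter.mpr ⟨hxA, hbx⟩
              have hlen : x.length ≤ (t ++ [c]).length := hmax x hxS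
              have : x = t ++ [!c] :=
                (hpre.eq_of_length
                  (Nat.le_antisymm hpre.length_le (by simpa using hlen))).symm
              exact ha' (this ▸ hxA)
            · exact hA x hxA y hyA hxy hpre
        have hWleAC : Wle A C := fun z hz =>
          ⟨z, Finset.mem_insert_of_mem hz, List.prefix_refl _⟩
        have hAneC : A ≠ C := by
          intro h
          exact ha' (h ▸ Finset.mem_insert_self _ _)
        have hWleCB : Wle C B := by
          intro x hx
          rcases Finset.mem_insert.mp hx with h | h
          · exact ⟨b, hbB, h ▸ hbt.trans (List.prefix_append _ _)⟩
          · exact hAB x h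
        have hCneB : C ≠ B := by
          intro h
          have haB : t ++ [c] ∈ B := h ▸ Finset.mem_insert_of_mem haA
          have : b ≠ t ++ [c] := fun e => hbA (e ▸ haA)
          exact hB (t ++ [c]) haB b hbB (fun e => this e.symm) hba
        exact hnC ⟨C, hCanti, ⟨hWleAC, hAneC⟩, hWleCB, hCneB⟩
    · -- no extension of b in A: insert b ++ [false] into A
      push_neg at hEx
      set C : Finset (List Bool) := insert (b ++ [false]) A with hC
      have hCanti : WAntichain C := by
        intro x hx y hy hxy hpre
        rcases Finset.mem_insert.mp hx with hx1 | hxA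
        · subst hx1
          rcases Finset.mem_insert.mp hy with hy1 | hyA
          · exact hxy hy1.symm
          · rcases concat_cases hpre with h | h
            · exact hbA ((eq_of_prefix hAB hB hyA hbB h) ▸ hyA)
            · exact hxy h.symm
        · rcases Finset.mem_insert.mp hy with hy1 | hyA
          · subst hy1
            exact hEx x hxA ((List.prefix_append _ _).trans hpre)
          · exact hA x hxA y hyA hxy hpre
      have hWleAC : Wle A C := fun z hz =>
        ⟨z, Finset.mem_insert_of_mem hz, List.prefix_refl _⟩
      have hAneC : A ≠ C := by
        intro h
        have : b ++ [false] ∈ A := h ▸ Finset.mem_insert_self _ _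
        exact hEx _ this (List.prefix_append _ _)
      have hWleCB : Wle C B := by
        intro x hx
        rcases Finset.mem_insert.mp hx with h | h
        · exact ⟨b, hbB, h ▸ List.prefix_append _ _⟩
        · exact hAB x h
      have hCneB : C ≠ B := by
        intro h
        rw [← h] at hbB
        rcases Finset.mem_insert.mp hbB with h1 | h1
        · simp at h1
        · exact hbA h1
      exact hnC ⟨C, hCanti, ⟨hWleAC, hAneC⟩, hWleCB, hCneB⟩
  · -- backward direction
    rintro ⟨W, hWB, hW0A, hW1A, hEq⟩
    have hWnA : W ∉ A := fun h =>
      hA (W ++ [false]) hW0A W h (by simp) (List.prefix_append _ _)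
    have hW0B : W ++ [false] ∉ B := fun h =>
      hB (W ++ [false]) h W hWB (by simp) (List.prefix_append _ _)
    have hW1B : W ++ [true] ∉ B := fun h =>
      hB (W ++ [true]) h W hWB (by simp) (List.prefix_append _ _)
    have hAB : Wle A B := by
      intro a haA
      by_cases h0 : a = W ++ [false]
      · exact ⟨W, hWB, h0 ▸ List.prefix_append _ _⟩
      by_cases h1 : a = W ++ [true]
      · exact ⟨W, hWB, h1 ▸ List.prefix_append _ _⟩
      · have : a ∈ B \ {W} := hEq ▸ (Finset.mem_sdiff.mpr ⟨haA, by simp [h0, h1]⟩)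
        exact ⟨a, (Finset.mem_sdiff.mp this).1, List.prefix_refl _⟩
    refine ⟨hAB, fun h => hWnA (h ▸ hWB), ?_⟩
    rintro ⟨C, hC, ⟨hAC, hACne⟩, hCB, hCBne⟩
    -- every element of B other than W lies in C (and in A)
    have hmemA : ∀ u ∈ B, u ≠ W → u ∈ A := by
      intro u huB huW
      have : u ∈ A \ {W ++ [false], W ++ [true]} :=
        hEq ▸ (Finset.mem_sdiff.mpr ⟨huB, by simp [huW]⟩)
      exact (Finset.mem_sdiff.mp this).1
    have hstep1 : ∀ u ∈ B, u ≠ W → u ∈ C := by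
      intro u huB huW
      obtain ⟨v, hvC, hvu⟩ := hAC u (hmemA u huB huW)
      exact (eq_of_prefix hCB hB hvC huB hvu) ▸ hvC
    -- analyse the prefix of W ++ [false] lying in C
    have hkey : ∀ d : Bool, W ++ [d] ∈ A → (W ∈ C ∨ W ++ [d] ∈ C) := by
      intro d hdA
      obtain ⟨v, hvC, hv0⟩ := hAC (W ++ [d]) hdA
      obtain ⟨u, huB, huv⟩ := hCB v hvC
      have huW : u = W := by
        rcases concat_cases (huv.trans hv0) with h | h
        · by_contra hne
          exact hB W hWB u huB (fun e => hne e.symm) h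
        · exfalso
          cases d
          · exact hW0B (h ▸ huB)
          · exact hW1B (h ▸ huB)
      subst huW
      rcases concat_cases hv0 with h | h
      · exact Or.inl ((pre_antisymm h huv) ▸ hvC)
      · exact Or.inr (h ▸ hvC)
    rcases hkey false hW0A with hWC | hW0C
    · -- W ∈ C : show C = B
      apply hCBne
      ext x
      constructor
      · intro hxC
        obtain ⟨u, huB, hux⟩ := hCB x hxC
        by_cases huW : u = W
        · subst huW
          have : x = u := by
            by_contra hne
            exact hC x hxC u hWC hne hux
          exact this ▸ huB
        · have huC : u ∈ C := hstep1 u huB huW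
          have : x = u := by
            by_contra hne
            exact hC x hxC u huC hne hux
          exact this ▸ huB
      · intro hxB
        by_cases hxW : x = W
        · exact hxW ▸ hWC
        · exact hstep1 x hxB hxW
    · -- W ++ [false] ∈ C : show C = A
      have hW1C : W ++ [true] ∈ C := by
        rcases hkey true hW1A with hWC | h
        · exact absurd (List.prefix_append W [false])
            (hC (W ++ [false]) hW0C W hWC (by simp))
        · exact h
      apply hACne
      ext x
      constructor
      · intro hxA
        by_cases h0 : x = W ++ [false]
        · exact h0 ▸ hW0C
        by_cases h1 : x = W ++ [true]
        · exact h1 ▸ hW1C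
        · have hxB : x ∈ B \ {W} := hEq ▸ (Finset.mem_sdiff.mpr ⟨hxA, by simp [h0, h1]⟩)
          rw [Finset.mem_sdiff, Finset.mem_singleton] at hxB
          exact hstep1 x hxB.1 hxB.2
      · intro hxC
        obtain ⟨u, huB, hux⟩ := hCB x hxC
        by_cases huW : u = W
        · subst huW
          obtain ⟨s, rfl⟩ := hux
          match s with
          | [] =>
            simp only [List.append_nil] at hxC
            exact absurd (List.prefix_append u [false])
              (hC (u ++ [false]) hW0C u hxC (by simp))
          | d :: s' =>
            have hdC : u ++ [d] ∈ C := by cases d <;> assumption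
            have hpre : u ++ [d] <+: u ++ d :: s' := ⟨s', by simp⟩
            have hx : u ++ d :: s' = u ++ [d] := by
              by_contra hne
              exact hC _ hxC _ hdC hne hpre
            rw [hx]
            cases d
            · exact hW0A
            · exact hW1A
        · have huA : u ∈ A := hmemA u huB huW
          have huC : u ∈ C := hstep1 u huB huW
          have : x = u := by
            by_contra hne
            exact hC x hxC u huC hne hux
          exact this ▸ huA
end

section
/- Let ℐ be the set of finite sets A of pairs (a, b) of rationals with 0 ≤ a < b ≤ 1 such that the corresponding closed intervals [a, b] are pairwise disjoint, ordered by: A ≤ B iff for every (a, b) ∈ A there exists (a', b') ∈ B with a' ≤ a and b ≤ b'. Then (ℐ, ≤) is a partial order which is universal: for every partial order P on a countable type there is a map f : P → ℐ such that p ≤ q if and only if f p ≤ f q. -/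
/-- A finite set of pairs of rationals encoding pairwise disjoint closed subintervals
of `[0, 1]`. -/
def IsIntervalSet (A : Finset (ℚ × ℚ)) : Prop :=
  (∀ p ∈ A, 0 ≤ p.1 ∧ p.1 < p.2 ∧ p.2 ≤ 1) ∧
  ∀ p ∈ A, ∀ q ∈ A, p ≠ q → Disjoint (Set.Icc p.1 p.2) (Set.Icc q.1 q.2)

/-- `A ≤ B` iff every interval of `A` is contained in some interval of `B`. -/
def Ile (A B : Finset (ℚ × ℚ)) : Prop :=
  ∀ p ∈ A, ∃ q ∈ B, q.1 ≤ p.1 ∧ p.2 ≤ q.2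

namespace IUniv


/-- The affine map placing `[0,1]` onto the `k`-th child interval `[2/4^(k+1), 3/4^(k+1)]`. -/
def cmap (k : ℕ) (x : ℚ) : ℚ := (2 + x) / 4 ^ (k + 1)

/-- The interval associated to a finite string of naturals. -/
def emb : List ℕ → ℚ × ℚ
  | [] => (0, 1)
  | k :: l => (cmap k (emb l).1, cmap k (emb l).2)

lemma cmap_le_cmap {k : ℕ} {x y : ℚ} (h : x ≤ y) : cmap k x ≤ cmap k y := by
  unfold cmap; gcongr

lemma cmap_lt_cmap {k : ℕ} {x y : ℚ} (h : x < y) : cmap k x < cmap k y := by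
  unfold cmap
  have h4 : (0:ℚ) < 4 ^ (k+1) := by positivity
  rw [div_lt_div_iff₀ h4 h4]
  nlinarith

lemma emb_spec (l : List ℕ) : 0 ≤ (emb l).1 ∧ (emb l).1 < (emb l).2 ∧ (emb l).2 ≤ 1 := by
  induction l with
  | nil => norm_num [emb]
  | cons k l ih =>
    obtain ⟨h1, h2, h3⟩ := ih
    have h4 : (0:ℚ) < 4 ^ (k+1) := by positivity
    have h5 : (4:ℚ) ≤ 4 ^ (k+1) := by
      calc (4:ℚ) = 4 ^ 1 := (pow_one 4).symm
      _ ≤ 4 ^ (k+1) := by apply pow_le_pow_right₀ <;> norm_num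
    refine ⟨?_, cmap_lt_cmap h2, ?_⟩
    · unfold emb cmap; dsimp; positivity
    · show cmap k (emb l).2 ≤ 1
      unfold cmap
      rw [div_le_one h4]
      linarith

lemma emb_cons_lb (k : ℕ) (l : List ℕ) : 2 / 4 ^ (k+1) ≤ (emb (k :: l)).1 := by
  have := (emb_spec l).1
  show (2:ℚ)/4^(k+1) ≤ cmap k (emb l).1
  unfold cmap; gcongr; linarith

lemma emb_cons_ub (k : ℕ) (l : List ℕ) : (emb (k :: l)).2 ≤ 3 / 4 ^ (k+1) := by
  have h1 := (emb_spec l).2.2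
  show cmap k (emb l).2 ≤ (3:ℚ)/4^(k+1)
  unfold cmap; gcongr; linarith

lemma gap {k k' : ℕ} (h : k < k') : (3:ℚ) / 4 ^ (k'+1) < 2 / 4 ^ (k+1) := by
  have h1 : (4:ℚ) ^ (k+1+1) ≤ 4 ^ (k'+1) := by
    apply pow_le_pow_right₀ (by norm_num); omega
  have hp1 : (0:ℚ) < 4 ^ (k+1+1) := by positivity
  have hp2 : (0:ℚ) < 4 ^ (k'+1) := by positivity
  have hp3 : (0:ℚ) < 4 ^ (k+1) := by positivity
  have h2 : (3:ℚ) / 4 ^ (k'+1) ≤ 3 / 4 ^ (k+1+1) := by gcongr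
  have h3 : (3:ℚ) / 4 ^ (k+1+1) < 2 / 4 ^ (k+1) := by
    rw [div_lt_div_iff₀ hp1 hp3]
    have : (4:ℚ) ^ (k+1+1) = 4 * 4 ^ (k+1) := by ring
    nlinarith
  linarith

lemma sub_of_prefix : ∀ {l l' : List ℕ}, l <+: l' →
    (emb l).1 ≤ (emb l').1 ∧ (emb l').2 ≤ (emb l).2 := by
  intro l
  induction l with
  | nil => intro l' _; exact ⟨(emb_spec l').1, (emb_spec l').2.2⟩
  | cons k t ih =>
    intro l' h
    match l', h with
    | k' :: t', h =>
      rw [List.cons_prefix_cons] at h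
      obtain ⟨rfl, h⟩ := h
      obtain ⟨h1, h2⟩ := ih h
      exact ⟨cmap_le_cmap h1, cmap_le_cmap h2⟩

lemma lt_of_proper_prefix : ∀ {l l' : List ℕ}, l <+: l' → l ≠ l' → (emb l).1 < (emb l').1 := by
  intro l
  induction l with
  | nil =>
    intro l' _ hne
    match l', hne with
    | k :: t, _ =>
      have := emb_cons_lb k t
      have h4 : (0:ℚ) < 2 / 4 ^ (k+1) := by positivity
      show (0:ℚ) < (emb (k :: t)).1
      linarith
  | cons k t ih =>
    intro l' h hne
    match l', h with
    | k' :: t', h =>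
      rw [List.cons_prefix_cons] at h
      obtain ⟨rfl, h⟩ := h
      have hne' : t ≠ t' := fun he => hne (by rw [he])
      exact cmap_lt_cmap (ih h hne')

lemma disj_of_incomp : ∀ {l l' : List ℕ}, ¬ l <+: l' → ¬ l' <+: l →
    (emb l).2 < (emb l').1 ∨ (emb l').2 < (emb l).1 := by
  intro l
  induction l with
  | nil => intro l' h _; exact absurd (List.nil_prefix) h
  | cons k t ih =>
    intro l' h h'
    match l' with
    | [] => exact absurd (List.nil_prefix) h'
    | k' :: t' =>
      by_cases hk : k = k'
      · subst hk
        rw [List.cons_prefix_cons] at h h'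
        simp only [true_and] at h h'
        rcases ih h h' with hc | hc
        · exact Or.inl (cmap_lt_cmap hc)
        · exact Or.inr (cmap_lt_cmap hc)
      · rcases Nat.lt_or_ge k k' with hlt | hge
        · right
          calc (emb (k' :: t')).2 ≤ 3 / 4 ^ (k'+1) := emb_cons_ub k' t'
            _ < 2 / 4 ^ (k+1) := gap hlt
            _ ≤ (emb (k :: t)).1 := emb_cons_lb k t
        · have hlt : k' < k := lt_of_le_of_ne hge (fun he => hk he.symm)
          left
          calc (emb (k :: t)).2 ≤ 3 / 4 ^ (k+1) := emb_cons_ub k t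
            _ < 2 / 4 ^ (k'+1) := gap hlt
            _ ≤ (emb (k' :: t')).1 := emb_cons_lb k' t'

lemma prefix_of_sub {l l' : List ℕ} (h1 : (emb l').1 ≤ (emb l).1)
    (h2 : (emb l).2 ≤ (emb l').2) : l' <+: l := by
  by_cases hp : l' <+: l
  · exact hp
  by_cases hq : l <+: l'
  · have hne : l ≠ l' := fun h => hp (h ▸ List.prefix_refl l)
    have := lt_of_proper_prefix hq hne
    linarith
  · have h3 := (emb_spec l).2.1
    have h4 := (emb_spec l').2.1
    rcases disj_of_incomp hq hp with h5 | h5 <;> [linarith; linarith]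

lemma sort_filter_prefix (N : Finset ℕ) (c : ℕ) :
    ((N.filter (fun x => x ≤ c)).sort (· ≤ ·)) <+: (N.sort (· ≤ ·)) := by
  set A := (N.filter (fun x => x ≤ c)).sort (· ≤ ·) with hA
  set B := (N.filter (fun x => ¬ x ≤ c)).sort (· ≤ ·) with hB
  have hmemA : ∀ a ∈ A, a ∈ N ∧ a ≤ c := by
    intro a ha; rw [hA, Finset.mem_sort, Finset.mem_filter] at ha; exact ha
  have hmemB : ∀ b ∈ B, b ∈ N ∧ ¬ b ≤ c := by
    intro b hb; rw [hB, Finset.mem_sort, Finset.mem_filter] at hb; exact hb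
  have hAB : A ++ B = N.sort (· ≤ ·) := by
    apply fun hp hs => List.Perm.eq_of_pairwise' hs (Finset.pairwise_sort _ _) hp
    · apply List.perm_of_nodup_nodup_toFinset_eq
      · refine List.Nodup.append (Finset.sort_nodup _ _) (Finset.sort_nodup _ _) ?_
        intro a haA haB
        exact (hmemB a haB).2 (hmemA a haA).2
      · exact Finset.sort_nodup _ _
      · rw [List.toFinset_append]
        rw [hA, hB, Finset.sort_toFinset, Finset.sort_toFinset, Finset.sort_toFinset,
          Finset.filter_union_filter_not_eq]
    · rw [List.pairwise_append]
      refine ⟨Finset.pairwise_sort _ _, Finset.pairwise_sort _ _, ?_⟩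
      intro a ha b hb
      have h1 := (hmemA a ha).2
      have h2 := (hmemB b hb).2
      omega
  rw [← hAB]
  exact List.prefix_append A B

variable {P : Type} [PartialOrder P]

noncomputable local instance : DecidableEq P := Classical.decEq P

/-- `M` is history-closed: with any `x` it contains every earlier-indexed `y ≥ x`. -/
def histClosed (e : P → ℕ) (M : Finset P) : Prop :=
  ∀ x ∈ M, ∀ y, e y < e x → x ≤ y → y ∈ M

/-- Candidate sets for `p`. -/
def cand (e : P → ℕ) (p : P) : Set (Finset P) :=
  {M | M.Nonempty ∧ histClosed e M ∧
    ∃ a ∈ M, (∀ x ∈ M, e x ≤ e a) ∧ a ≤ p ∧ e a ≤ e p}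

/-- The sorted list of indices of `M`. -/
def key (e : P → ℕ) (M : Finset P) : List ℕ := (M.image e).sort (· ≤ ·)

/-- The set of strings attached to `p`. -/
def SS (e : P → ℕ) (p : P) : Set (List ℕ) := key e '' cand e p

/-- earlier strict uppers of `p`, as a finset -/
noncomputable def Uf (e : P → ℕ) (he : Function.Injective e) (p : P) : Finset P :=
  (((Set.finite_Iio (e p)).preimage he.injOn).subset
    (fun y (hy : e y < e p ∧ p ≤ y) => hy.1)).toFinset

lemma mem_Uf {e : P → ℕ} {he : Function.Injective e} {p y : P} :
    y ∈ Uf e he p ↔ e y < e p ∧ p ≤ y := Set.Finite.mem_toFinset _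

/-- history closure of `{p}` -/
noncomputable def Cl (e : P → ℕ) (he : Function.Injective e) (p : P) : Finset P :=
  insert p ((Uf e he p).attach.biUnion (fun y => Cl e he y.1))
termination_by e p
decreasing_by exact (mem_Uf.1 y.2).1

lemma mem_Cl_self (e : P → ℕ) (he : Function.Injective e) (p : P) : p ∈ Cl e he p := by
  rw [Cl]; exact Finset.mem_insert_self _ _

lemma Cl_le (e : P → ℕ) (he : Function.Injective e) :
    ∀ p, ∀ x ∈ Cl e he p, p ≤ x ∧ e x ≤ e p := by
  suffices H : ∀ n p, e p ≤ n → ∀ x ∈ Cl e he p, p ≤ x ∧ e x ≤ e p by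
    intro p; exact H (e p) p le_rfl
  intro n
  induction n with
  | zero =>
    intro p hp x hx
    rw [Cl] at hx
    rcases Finset.mem_insert.1 hx with rfl | hx
    · exact ⟨le_rfl, le_rfl⟩
    · obtain ⟨y, _, hxy⟩ := Finset.mem_biUnion.1 hx
      have := (mem_Uf.1 y.2).1
      omega
  | succ n ih =>
    intro p hp x hx
    rw [Cl] at hx
    rcases Finset.mem_insert.1 hx with rfl | hx
    · exact ⟨le_rfl, le_rfl⟩
    · obtain ⟨y, _, hxy⟩ := Finset.mem_biUnion.1 hx
      obtain ⟨h1, h2⟩ := mem_Uf.1 y.2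
      obtain ⟨h3, h4⟩ := ih y.1 (by omega) x hxy
      exact ⟨h2.trans h3, by omega⟩

lemma Cl_histClosed (e : P → ℕ) (he : Function.Injective e) (p : P) :
    histClosed e (Cl e he p) := by
  suffices H : ∀ n p, e p ≤ n → histClosed e (Cl e he p) by exact H (e p) p le_rfl
  intro n
  induction n with
  | zero =>
    intro p hp x hx y hy hxy
    rw [Cl] at hx ⊢
    rcases Finset.mem_insert.1 hx with rfl | hx
    · refine Finset.mem_insert_of_mem (Finset.mem_biUnion.2 ⟨⟨y, mem_Uf.2 ⟨by omega, hxy⟩⟩,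
        Finset.mem_attach _ _, mem_Cl_self e he y⟩)
    · obtain ⟨z, _, hxz⟩ := Finset.mem_biUnion.1 hx
      have := (mem_Uf.1 z.2).1
      omega
  | succ n ih =>
    intro p hp x hx y hy hxy
    rw [Cl] at hx ⊢
    rcases Finset.mem_insert.1 hx with rfl | hx
    · refine Finset.mem_insert_of_mem (Finset.mem_biUnion.2 ⟨⟨y, mem_Uf.2 ⟨by omega, hxy⟩⟩,
        Finset.mem_attach _ _, mem_Cl_self e he y⟩)
    · obtain ⟨z, hz, hxz⟩ := Finset.mem_biUnion.1 hx
      have h1 := (mem_Uf.1 z.2).1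
      have h2 := ih z.1 (by omega) x hxz y hy hxy
      exact Finset.mem_insert_of_mem (Finset.mem_biUnion.2 ⟨z, hz, h2⟩)

lemma Cl_mem_cand (e : P → ℕ) (he : Function.Injective e) (p : P) :
    Cl e he p ∈ cand e p :=
  ⟨⟨p, mem_Cl_self e he p⟩, Cl_histClosed e he p,
    p, mem_Cl_self e he p, fun x hx => (Cl_le e he p x hx).2, le_rfl, le_rfl⟩


/-- domination order on sets of strings -/
def dom (A B : Set (List ℕ)) : Prop := ∀ s ∈ A, ∃ t ∈ B, t <+: s

lemma dom_of_le {e : P → ℕ} {p q : P} (hpq : p ≤ q) : dom (SS e p) (SS e q) := by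
  rintro s ⟨M, ⟨hMne, hMc, a, haM, hamax, hap, hae⟩, rfl⟩
  by_cases hq : e a ≤ e q
  · exact ⟨key e M, ⟨M, ⟨hMne, hMc, a, haM, hamax, hap.trans hpq, hq⟩, rfl⟩,
      List.prefix_refl _⟩
  · push_neg at hq
    have hqM : q ∈ M := hMc a haM q hq (hap.trans hpq)
    refine ⟨key e (M.filter fun x => e x ≤ e q),
      ⟨M.filter fun x => e x ≤ e q,
        ⟨⟨q, Finset.mem_filter.2 ⟨hqM, le_rfl⟩⟩, ?_, q, Finset.mem_filter.2 ⟨hqM, le_rfl⟩,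
          ?_, le_rfl, le_rfl⟩, rfl⟩, ?_⟩
    · intro x hx y hy hxy
      obtain ⟨hx1, hx2⟩ := Finset.mem_filter.1 hx
      exact Finset.mem_filter.2 ⟨hMc x hx1 y hy hxy, by omega⟩
    · intro x hx; exact (Finset.mem_filter.1 hx).2
    · have himg : (M.filter fun x => e x ≤ e q).image e
          = (M.image e).filter (fun b => b ≤ e q) := by
        ext b
        simp only [Finset.mem_image, Finset.mem_filter]
        constructor
        · rintro ⟨x, ⟨hx1, hx2⟩, rfl⟩; exact ⟨⟨x, hx1, rfl⟩, hx2⟩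
        · rintro ⟨⟨x, hx1, rfl⟩, hb⟩; exact ⟨x, ⟨hx1, hb⟩, rfl⟩
      show key e _ <+: key e M
      unfold key
      rw [himg]
      exact sort_filter_prefix (M.image e) (e q)

lemma le_of_dom {e : P → ℕ} (he : Function.Injective e) {p q : P}
    (h : dom (SS e p) (SS e q)) : p ≤ q := by
  have hτ : key e (Cl e he p) ∈ SS e p := ⟨Cl e he p, Cl_mem_cand e he p, rfl⟩
  obtain ⟨t, ⟨M, ⟨hMne, _, a, haM, hamax, haq, _⟩, rfl⟩, hpre⟩ := h _ hτ
  have h1 : e a ∈ key e M := (Finset.mem_sort _).2 (Finset.mem_image_of_mem e haM)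
  have h2 : e a ∈ key e (Cl e he p) := hpre.sublist.subset h1
  have h3 : ∃ c ∈ Cl e he p, e c = e a := by
    have := (Finset.mem_sort (α := ℕ) (· ≤ ·)).1 h2
    simpa [Finset.mem_image] using this
  obtain ⟨c, hc, hce⟩ := h3
  have : c = a := he hce
  subst this
  exact (Cl_le e he p c hc).1.trans haq

/-- minimal strings -/
def minS (e : P → ℕ) (p : P) : Set (List ℕ) :=
  {s | s ∈ SS e p ∧ ∀ t ∈ SS e p, t <+: s → t = s}

lemma exists_min_prefix {e : P → ℕ} {p : P} :
    ∀ s ∈ SS e p, ∃ m ∈ minS e p, m <+: s := by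
  suffices H : ∀ n, ∀ s ∈ SS e p, s.length ≤ n → ∃ m ∈ minS e p, m <+: s by
    intro s hs; exact H s.length s hs le_rfl
  intro n
  induction n with
  | zero =>
    intro s hs hl
    refine ⟨s, ⟨hs, ?_⟩, List.prefix_refl _⟩
    intro t _ ht
    have := ht.length_le
    have : t.length = s.length := by omega
    exact ht.eq_of_length this
  | succ n ih =>
    intro s hs hl
    by_cases hmin : ∀ t ∈ SS e p, t <+: s → t = s
    · exact ⟨s, ⟨hs, hmin⟩, List.prefix_refl _⟩
    · push_neg at hmin
      obtain ⟨t, ht, htp, htne⟩ := hmin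
      have hlt : t.length < s.length := by
        rcases lt_or_eq_of_le htp.length_le with h | h
        · exact h
        · exact absurd (htp.eq_of_length h) htne
      obtain ⟨m, hm, hmp⟩ := ih t ht (by omega)
      exact ⟨m, hm, hmp.trans htp⟩

lemma SS_finite (e : P → ℕ) (he : Function.Injective e) (p : P) : (SS e p).Finite := by
  apply Set.Finite.image
  have hcar : ({x : P | e x ≤ e p}).Finite :=
    (Set.finite_Iic (e p)).preimage he.injOn
  apply Set.Finite.subset (hcar.toFinset.powerset.finite_toSet)
  rintro M ⟨_, _, a, _, hmax, _, hae⟩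
  simp only [Finset.coe_powerset, Set.mem_preimage, Set.mem_powerset_iff,
    Finset.coe_subset, Finset.mem_coe]
  intro x hx
  rw [Set.Finite.mem_toFinset]
  exact le_trans (hmax x hx) hae

/-- The universal map. -/
noncomputable def F (e : P → ℕ) (he : Function.Injective e) (p : P) : Finset (ℚ × ℚ) :=
  (((SS_finite e he p).subset (show minS e p ⊆ SS e p from fun s hs => hs.1)).image emb).toFinset

lemma mem_F {e : P → ℕ} {he : Function.Injective e} {p : P} {u : ℚ × ℚ} :
    u ∈ F e he p ↔ ∃ s ∈ minS e p, emb s = u := by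
  simp [F, Set.Finite.mem_toFinset, Set.mem_image]

lemma isIntervalSet_F (e : P → ℕ) (he : Function.Injective e) (p : P) :
    IsIntervalSet (F e he p) := by
  constructor
  · intro u hu
    obtain ⟨s, _, rfl⟩ := mem_F.1 hu
    exact emb_spec s
  · intro u hu v hv huv
    obtain ⟨s, hs, rfl⟩ := mem_F.1 hu
    obtain ⟨t, ht, rfl⟩ := mem_F.1 hv
    have hst : s ≠ t := fun h => huv (by rw [h])
    have h1 : ¬ s <+: t := fun h => hst (ht.2 s hs.1 h)
    have h2 : ¬ t <+: s := fun h => hst (hs.2 t ht.1 h).symm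
    rcases disj_of_incomp h1 h2 with h | h <;>
    · rw [Set.disjoint_left]
      intro z hz1 hz2
      simp only [Set.mem_Icc] at hz1 hz2
      linarith

lemma le_iff_Ile (e : P → ℕ) (he : Function.Injective e) (p q : P) :
    p ≤ q ↔ Ile (F e he p) (F e he q) := by
  constructor
  · intro hpq u hu
    obtain ⟨s, hs, rfl⟩ := mem_F.1 hu
    obtain ⟨t, ht, htp⟩ := dom_of_le hpq s hs.1
    obtain ⟨m, hm, hmp⟩ := exists_min_prefix t ht
    have := sub_of_prefix (hmp.trans htp)
    exact ⟨emb m, mem_F.2 ⟨m, hm, rfl⟩, this.1, this.2⟩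
  · intro hIle
    apply le_of_dom he
    intro s hs
    obtain ⟨m, hm, hmp⟩ := exists_min_prefix s hs
    obtain ⟨v, hv, hsub1, hsub2⟩ := hIle (emb m) (mem_F.2 ⟨m, hm, rfl⟩)
    obtain ⟨t, ht, rfl⟩ := mem_F.1 hv
    have := prefix_of_sub hsub1 hsub2
    exact ⟨t, ht.1, this.trans hmp⟩

end IUniv

/-- `(ℐ, ≤)` is a partial order (reflexive, transitive and antisymmetric on interval
sets) and is universal for countable partial orders. -/
theorem I_partialOrder_and_universal :
    (∀ A : Finset (ℚ × ℚ), IsIntervalSet A → Ile A A) ∧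
    (∀ A B C : Finset (ℚ × ℚ), IsIntervalSet A → IsIntervalSet B → IsIntervalSet C →
      Ile A B → Ile B C → Ile A C) ∧
    (∀ A B : Finset (ℚ × ℚ), IsIntervalSet A → IsIntervalSet B →
      Ile A B → Ile B A → A = B) ∧
    (∀ (P : Type) [Countable P] [PartialOrder P],
      ∃ f : P → Finset (ℚ × ℚ), (∀ p, IsIntervalSet (f p)) ∧
        ∀ p q : P, p ≤ q ↔ Ile (f p) (f q)) := by
  refine ⟨?_, ?_, ?_, ?_⟩
  · intro A _ p hp
    exact ⟨p, hp, le_rfl, le_rfl⟩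
  · intro A B C _ _ _ hAB hBC p hp
    obtain ⟨q, hq, h1, h2⟩ := hAB p hp
    obtain ⟨r, hr, h3, h4⟩ := hBC q hq
    exact ⟨r, hr, le_trans h3 h1, le_trans h2 h4⟩
  · intro A B hA hB hAB hBA
    have key : ∀ (X Y : Finset (ℚ × ℚ)), IsIntervalSet X → IsIntervalSet Y →
        Ile X Y → Ile Y X → ∀ p ∈ X, p ∈ Y := by
      intro X Y hX hY hXY hYX p hp
      obtain ⟨q, hq, h1, h2⟩ := hXY p hp
      obtain ⟨r, hr, h3, h4⟩ := hYX q hq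
      have hpr : p = r := by
        by_contra hne
        have hd := hX.2 p hp r hr hne
        have hple := (hX.1 p hp).2.1
        have hm1 : p.1 ∈ Set.Icc p.1 p.2 := Set.mem_Icc.2 ⟨le_rfl, le_of_lt hple⟩
        have hm2 : p.1 ∈ Set.Icc r.1 r.2 :=
          Set.mem_Icc.2 ⟨le_trans h3 h1, by linarith⟩
        exact Set.disjoint_left.1 hd hm1 hm2
      have hqp : q = p := by
        refine Prod.ext (le_antisymm h1 ?_) (le_antisymm ?_ h2)
        · rw [hpr]; exact h3
        · rw [hpr]; exact h4
      rwa [hqp] at hq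
    ext p
    exact ⟨fun hp => key A B hA hB hAB hBA p hp, fun hp => key B A hB hA hBA hAB p hp⟩
  · intro P _ _
    obtain ⟨e, he⟩ := Countable.exists_injective_nat P
    exact ⟨IUniv.F e he, IUniv.isIntervalSet_F e he, IUniv.le_iff_Ile e he⟩
end

section
/- The partial order (ℐ, ≤) is dense (has no gaps): for all A, B ∈ ℐ with A ≤ B and A ≠ B there exists C ∈ ℐ with A ≤ C, A ≠ C, C ≤ B and C ≠ B. -/
lemma gap_exists (c d : ℚ) (hcd : c < d) (S : Finset (ℚ × ℚ))
    (hS : ∀ p ∈ S, c ≤ p.1 ∧ p.1 < p.2 ∧ p.2 ≤ d ∧ p ≠ (c, d))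
    (hdisj : ∀ p ∈ S, ∀ q ∈ S, p ≠ q → Disjoint (Set.Icc p.1 p.2) (Set.Icc q.1 q.2)) :
    ∃ u v : ℚ, c ≤ u ∧ u < v ∧ v ≤ d ∧ (u, v) ≠ (c, d) ∧
      ∀ p ∈ S, Disjoint (Set.Icc u v) (Set.Icc p.1 p.2) := by
  rcases S.eq_empty_or_nonempty with h | ⟨p₀, hp₀⟩
  · refine ⟨(2*c+d)/3, (c+2*d)/3, by linarith, by linarith, by linarith, ?_, ?_⟩
    · intro hh
      have := congrArg Prod.fst hh
      simp only at this
      linarith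
    · intro p hp; rw [h] at hp; exact absurd hp (Finset.notMem_empty p)
  · have hTne : (S.image Prod.snd).Nonempty := ⟨p₀.2, Finset.mem_image_of_mem _ hp₀⟩
    set b : ℚ := (S.image Prod.snd).max' hTne with hb
    obtain ⟨ps, hpsS, hps2⟩ := Finset.mem_image.mp ((S.image Prod.snd).max'_mem hTne)
    rw [← hb] at hps2
    have hmax : ∀ p ∈ S, p.2 ≤ b := fun p hp =>
      Finset.le_max' _ _ (Finset.mem_image_of_mem _ hp)
    have hcb : c < b := by
      obtain ⟨h1, h2, _, _⟩ := hS ps hpsS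
      rw [← hps2]; linarith
    have hbd : b ≤ d := by rw [← hps2]; exact (hS ps hpsS).2.2.1
    rcases lt_or_eq_of_le hbd with hblt | hbeq
    · -- b < d : take [(b+d)/2, d]
      refine ⟨(b+d)/2, d, by linarith, by linarith, le_refl d, ?_, ?_⟩
      · intro hh
        have := congrArg Prod.fst hh
        simp only at this
        linarith
      · intro p hp
        rw [Set.disjoint_left]
        rintro x ⟨hx1, hx2⟩ ⟨hy1, hy2⟩
        have := hmax p hp
        linarith
    · -- b = d : ps = (a*, d)
      have hpsd : ps.2 = d := by rw [hps2, hbeq]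
      have hca : c < ps.1 := by
        obtain ⟨h1, _, _, h4⟩ := hS ps hpsS
        rcases lt_or_eq_of_le h1 with h | h
        · exact h
        · exfalso; exact h4 (Prod.ext h.symm hpsd)
      have had : ps.1 < d := by
        have := (hS ps hpsS).2.1
        rw [hpsd] at this; exact this
      have hother : ∀ p ∈ S, p ≠ ps → p.2 < ps.1 := by
        intro p hp hne
        by_contra hge
        push_neg at hge
        have hd := hdisj p hp ps hpsS hne
        have hpd : p.2 ≤ d := (hS p hp).2.2.1
        have h1 : p.2 ∈ Set.Icc p.1 p.2 := ⟨le_of_lt (hS p hp).2.1, le_refl _⟩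
        have h2 : p.2 ∈ Set.Icc ps.1 ps.2 := ⟨hge, by rw [hpsd]; exact hpd⟩
        exact Set.disjoint_left.mp hd h1 h2
      set T : Finset ℚ := insert c ((S.erase ps).image Prod.snd) with hT
      have hTne' : T.Nonempty := ⟨c, Finset.mem_insert_self _ _⟩
      set m : ℚ := T.max' hTne' with hm
      have hcm : c ≤ m := Finset.le_max' _ _ (Finset.mem_insert_self _ _)
      have hma : m < ps.1 := by
        apply Finset.max'_lt_iff _ hTne' |>.mpr
        intro y hy
        rcases Finset.mem_insert.mp hy with h | h
        · rw [h]; exact hca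
        · obtain ⟨p, hp, hpy⟩ := Finset.mem_image.mp h
          rw [← hpy]
          exact hother p (Finset.mem_of_mem_erase hp) (Finset.ne_of_mem_erase hp)
      have hmle : ∀ p ∈ S, p ≠ ps → p.2 ≤ m := by
        intro p hp hne
        exact Finset.le_max' _ _ (Finset.mem_insert_of_mem
          (Finset.mem_image_of_mem _ (Finset.mem_erase.mpr ⟨hne, hp⟩)))
      refine ⟨(2*m+ps.1)/3, (m+2*ps.1)/3, by linarith, by linarith, by linarith, ?_, ?_⟩
      · intro hh
        have := congrArg Prod.snd hh
        simp only at this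
        linarith
      · intro p hp
        by_cases hppe : p = ps
        · subst hppe
          rw [Set.disjoint_left]
          rintro x ⟨hx1, hx2⟩ ⟨hy1, hy2⟩
          linarith
        · rw [Set.disjoint_left]
          rintro x ⟨hx1, hx2⟩ ⟨hy1, hy2⟩
          have := hmle p hp hppe
          linarith

/-- The partial order `(ℐ, ≤)` is dense: it has no gaps. -/
theorem I_dense (A B : Finset (ℚ × ℚ)) (hA : IsIntervalSet A) (hB : IsIntervalSet B)
    (hAB : Ile A B) (hne : A ≠ B) :
    ∃ C : Finset (ℚ × ℚ), IsIntervalSet C ∧ Ile A C ∧ A ≠ C ∧ Ile C B ∧ C ≠ B := by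
  -- First find q ∈ B with q ∉ A.
  have hq : ∃ q ∈ B, q ∉ A := by
    by_contra h
    push_neg at h
    -- B ⊆ A; since A ≠ B, there is p ∈ A \ B
    have hpAB : ∃ p ∈ A, p ∉ B := by
      by_contra h2
      push_neg at h2
      exact hne (Finset.Subset.antisymm h2 h)
    obtain ⟨p, hpA, hpB⟩ := hpAB
    obtain ⟨q, hqB, hq1, hq2⟩ := hAB p hpA
    have hqA : q ∈ A := h q hqB
    have hpq : p ≠ q := fun hh => hpB (hh ▸ hqB)
    have hd := hA.2 p hpA q hqA hpq
    have h1 : p.1 ∈ Set.Icc p.1 p.2 := ⟨le_refl _, le_of_lt (hA.1 p hpA).2.1⟩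
    have h2 : p.1 ∈ Set.Icc q.1 q.2 := ⟨hq1, le_trans (le_of_lt (hA.1 p hpA).2.1) hq2⟩
    exact Set.disjoint_left.mp hd h1 h2
  obtain ⟨q, hqB, hqA⟩ := hq
  have hq01 := hB.1 q hqB
  set S : Finset (ℚ × ℚ) := A.filter (fun p => q.1 ≤ p.1 ∧ p.2 ≤ q.2) with hSdef
  have hSsub : ∀ p ∈ S, p ∈ A ∧ q.1 ≤ p.1 ∧ p.2 ≤ q.2 := by
    intro p hp
    have := Finset.mem_filter.mp hp
    exact ⟨this.1, this.2⟩
  obtain ⟨u, v, huc, huv, hvd, hune, hgap⟩ :=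
    gap_exists q.1 q.2 hq01.2.1 S
      (by
        intro p hp
        obtain ⟨hpA, h1, h2⟩ := hSsub p hp
        refine ⟨h1, (hA.1 p hpA).2.1, h2, ?_⟩
        intro hh
        rw [hh] at hpA
        exact hqA (by rwa [Prod.mk.eta] at hpA))
      (fun p hp p' hp' hne' => hA.2 p (hSsub p hp).1 p' (hSsub p' hp').1 hne')
  -- key: (u,v) is disjoint from all intervals of A
  have hkey : ∀ p ∈ A, Disjoint (Set.Icc u v) (Set.Icc p.1 p.2) := by
    intro p hpA
    by_cases hpS : p ∈ S
    · exact hgap p hpS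
    · obtain ⟨q', hq'B, h1, h2⟩ := hAB p hpA
      have hqq' : q ≠ q' := by
        intro hh
        exact hpS (Finset.mem_filter.mpr ⟨hpA, hh ▸ h1, hh ▸ h2⟩)
      have hd := hB.2 q hqB q' hq'B hqq'
      exact hd.mono (Set.Icc_subset_Icc huc hvd) (Set.Icc_subset_Icc h1 h2)
  have huvA : (u, v) ∉ A := by
    intro hmem
    have := hkey (u, v) hmem
    rw [disjoint_self] at this
    have huin : u ∈ Set.Icc u v := ⟨le_refl _, le_of_lt huv⟩
    simp only [Set.bot_eq_empty] at this
    rw [this] at huin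
    exact huin
  refine ⟨insert (u, v) A, ⟨?_, ?_⟩, ?_, ?_, ?_, ?_⟩
  · -- bounds
    intro p hp
    rcases Finset.mem_insert.mp hp with h | h
    · subst h
      exact ⟨le_trans hq01.1 huc, huv, le_trans hvd hq01.2.2⟩
    · exact hA.1 p h
  · -- pairwise disjoint
    intro p hp p' hp' hne'
    rcases Finset.mem_insert.mp hp with h | h <;>
      rcases Finset.mem_insert.mp hp' with h' | h'
    · exact absurd (h.trans h'.symm) hne'
    · subst h; exact hkey p' h'
    · subst h'; exact (hkey p h).symm
    · exact hA.2 p h p' h' hne'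
  · -- Ile A C
    intro p hp
    exact ⟨p, Finset.mem_insert_of_mem hp, le_refl _, le_refl _⟩
  · -- A ≠ C
    intro hh
    have : (u, v) ∈ A := hh ▸ Finset.mem_insert_self (u, v) A
    exact huvA this
  · -- Ile C B
    intro p hp
    rcases Finset.mem_insert.mp hp with h | h
    · subst h
      exact ⟨q, hqB, huc, hvd⟩
    · exact hAB p h
  · -- C ≠ B
    intro hh
    have hqC : q ∈ insert (u, v) A := hh ▸ hqB
    rcases Finset.mem_insert.mp hqC with h | h
    · exact hune (by rw [← h])
    · exact hqA h
end
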